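/- arXiv:1907.04399 — 3 statements merged into one kernel-verified Lean document; each statement's English description precedes it below -/
import Mathlib

section
/- For every real C > 0 and any sequence of pairs (a_B, B) with a_B = ⌊C√B⌋, letting h_B = ⌊(-(2a_B+1) + √((2a_B+1)² + 8B))/2⌋ and p_B = ⌊(-1 + √(1 + 8(B − a_B)))/2⌋, the ratio (a_B + p_B)/(a_B + h_B) tends to (C + √2)/√(C² + 2) as B → ∞. -/
open Filter Real

private lemma aux_sqrt_atTop : Tendsto (fun B : ℕ => Real.sqrt B) atTop atTop := by
  apply tendsto_atTop_atTop.mpr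
  intro b
  refine ⟨⌈b ^ 2⌉₊, fun a ha => ?_⟩
  have h1 : (b : ℝ) ^ 2 ≤ (a : ℝ) := le_trans (Nat.le_ceil _) (by exact_mod_cast ha)
  calc b ≤ |b| := le_abs_self b
    _ = Real.sqrt (b ^ 2) := (Real.sqrt_sq_eq_abs b).symm
    _ ≤ Real.sqrt a := Real.sqrt_le_sqrt h1

private lemma aux_eps : Tendsto (fun B : ℕ => 1 / Real.sqrt B) atTop (nhds 0) := by
  exact aux_sqrt_atTop.inv_tendsto_atTop.congr (fun B => by simp [one_div])

private lemma aux_floor_div_sqrt {x : ℕ → ℝ} {L : ℝ}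
    (hx : Tendsto (fun B : ℕ => x B / Real.sqrt B) atTop (nhds L)) :
    Tendsto (fun B : ℕ => ((⌊x B⌋ : ℤ) : ℝ) / Real.sqrt B) atTop (nhds L) := by
  have hlo : Tendsto (fun B : ℕ => x B / Real.sqrt B - 1 / Real.sqrt B) atTop (nhds L) := by
    simpa using hx.sub aux_eps
  refine tendsto_of_tendsto_of_tendsto_of_le_of_le' hlo hx ?_ ?_
  · filter_upwards [eventually_ge_atTop 1] with B hB
    have hs : (0:ℝ) < Real.sqrt B := Real.sqrt_pos.mpr (by exact_mod_cast hB)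
    rw [div_sub_div_same]
    gcongr
    exact (Int.sub_one_lt_floor _).le
  · filter_upwards [eventually_ge_atTop 1] with B hB
    have hs : (0:ℝ) < Real.sqrt B := Real.sqrt_pos.mpr (by exact_mod_cast hB)
    gcongr
    exact Int.floor_le _

theorem stmt_3 (C : ℝ) (hC : 0 < C) :
    Filter.Tendsto (fun B : ℕ =>
      (((⌊C * Real.sqrt B⌋₊ : ℝ) +
        ((⌊(-1 + Real.sqrt (1 + 8 * ((B : ℝ) - ⌊C * Real.sqrt B⌋₊))) / 2⌋ : ℤ) : ℝ)) /
       ((⌊C * Real.sqrt B⌋₊ : ℝ) +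
        ((⌊(-(2 * (⌊C * Real.sqrt B⌋₊ : ℝ) + 1) +
            Real.sqrt ((2 * (⌊C * Real.sqrt B⌋₊ : ℝ) + 1) ^ 2 + 8 * B)) / 2⌋ : ℤ) : ℝ))))
      Filter.atTop (nhds ((C + Real.sqrt 2) / Real.sqrt (C ^ 2 + 2))) := by
  have hε := aux_eps
  -- a_B / sqrt B → C
  have hu : Tendsto (fun B : ℕ => (⌊C * Real.sqrt B⌋₊ : ℝ) / Real.sqrt B) atTop (nhds C) := by
    have hlo : Tendsto (fun B : ℕ => C - 1 / Real.sqrt B) atTop (nhds C) := by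
      simpa using tendsto_const_nhds.sub aux_eps
    refine tendsto_of_tendsto_of_tendsto_of_le_of_le' hlo tendsto_const_nhds ?_ ?_
    · filter_upwards [eventually_ge_atTop 1] with B hB
      have hs : (0:ℝ) < Real.sqrt B := Real.sqrt_pos.mpr (by exact_mod_cast hB)
      have h1 : C * Real.sqrt B - 1 ≤ (⌊C * Real.sqrt B⌋₊ : ℝ) := by
        have := Nat.lt_floor_add_one (C * Real.sqrt B)
        linarith
      have h2 : C - 1 / Real.sqrt B = (C * Real.sqrt B - 1) / Real.sqrt B := by
        field_simp
      rw [h2]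
      gcongr
    · filter_upwards [eventually_ge_atTop 1] with B hB
      have hs : (0:ℝ) < Real.sqrt B := Real.sqrt_pos.mpr (by exact_mod_cast hB)
      rw [div_le_iff₀ hs]
      exact Nat.floor_le (by positivity)
  -- a_B / B → 0
  have haB : Tendsto (fun B : ℕ => (⌊C * Real.sqrt B⌋₊ : ℝ) / B) atTop (nhds 0) := by
    have hup : Tendsto (fun B : ℕ => C * (1 / Real.sqrt B)) atTop (nhds 0) := by
      have := aux_eps.const_mul C; rwa [mul_zero] at this
    refine tendsto_of_tendsto_of_tendsto_of_le_of_le' tendsto_const_nhds hup ?_ ?_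
    · filter_upwards with B; positivity
    · filter_upwards [eventually_ge_atTop 1] with B hB
      have hB0 : (0:ℝ) < B := by exact_mod_cast hB
      have hs : (0:ℝ) < Real.sqrt B := Real.sqrt_pos.mpr hB0
      rw [div_le_iff₀ hB0]
      have h1 : (⌊C * Real.sqrt B⌋₊ : ℝ) ≤ C * Real.sqrt B := Nat.floor_le (by positivity)
      have h2 : (1 / Real.sqrt B) * (B:ℝ) = Real.sqrt B := by
        rw [one_div, inv_mul_eq_div, Real.div_sqrt]
      calc (⌊C * Real.sqrt B⌋₊ : ℝ) ≤ C * Real.sqrt B := h1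
        _ = C * (1 / Real.sqrt B) * B := by rw [mul_assoc, h2]
  -- p_B / sqrt B → sqrt 2
  have hp : Tendsto (fun B : ℕ =>
      ((⌊(-1 + Real.sqrt (1 + 8 * ((B : ℝ) - ⌊C * Real.sqrt B⌋₊))) / 2⌋ : ℤ) : ℝ) / Real.sqrt B)
      atTop (nhds (Real.sqrt 2)) := by
    apply aux_floor_div_sqrt
    have hg : Tendsto (fun B : ℕ =>
        (-(1 / Real.sqrt B) +
          Real.sqrt (1 / (B:ℝ) + 8 - 8 * ((⌊C * Real.sqrt B⌋₊ : ℝ) / B))) / 2)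
        atTop (nhds ((-0 + Real.sqrt (0 + 8 - 8 * 0)) / 2)) :=
      ((hε.neg).add (((tendsto_one_div_atTop_nhds_zero_nat.add tendsto_const_nhds).sub
        (haB.const_mul 8)).sqrt)).div_const 2
    have hval : ((-0 + Real.sqrt ((0:ℝ) + 8 - 8 * 0)) / 2) = Real.sqrt 2 := by
      have h8 : Real.sqrt 8 = 2 * Real.sqrt 2 := by
        rw [show (8:ℝ) = 2^2 * 2 by norm_num, Real.sqrt_mul (by positivity),
          Real.sqrt_sq (by norm_num)]
      norm_num [h8]
    rw [hval] at hg
    refine hg.congr' ?_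
    filter_upwards [eventually_ge_atTop 1, aux_sqrt_atTop.eventually_ge_atTop C] with B hB hsC
    have hB0 : (0:ℝ) < B := by exact_mod_cast hB
    have hs : (0:ℝ) < Real.sqrt B := Real.sqrt_pos.mpr hB0
    have hss : Real.sqrt B * Real.sqrt B = (B:ℝ) := Real.mul_self_sqrt hB0.le
    have haa : (⌊C * Real.sqrt B⌋₊ : ℝ) ≤ (B:ℝ) := by
      have h1 : (⌊C * Real.sqrt B⌋₊ : ℝ) ≤ C * Real.sqrt B := Nat.floor_le (by positivity)
      nlinarith
    have hy : (0:ℝ) ≤ 1 + 8 * ((B:ℝ) - ⌊C * Real.sqrt B⌋₊) := by linarith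
    have harg : 1 / (B:ℝ) + 8 - 8 * ((⌊C * Real.sqrt B⌋₊ : ℝ) / B)
        = (1 + 8 * ((B:ℝ) - ⌊C * Real.sqrt B⌋₊)) / B := by
      field_simp
      ring
    rw [harg, Real.sqrt_div hy]
    rw [div_div, eq_div_iff (by positivity : (0:ℝ) < 2 * Real.sqrt B).ne']
    field_simp
  -- h_B / sqrt B → sqrt (C^2+2) - C
  have hh : Tendsto (fun B : ℕ =>
      ((⌊(-(2 * (⌊C * Real.sqrt B⌋₊ : ℝ) + 1) +
          Real.sqrt ((2 * (⌊C * Real.sqrt B⌋₊ : ℝ) + 1) ^ 2 + 8 * B)) / 2⌋ : ℤ) : ℝ) / Real.sqrt B)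
      atTop (nhds (Real.sqrt (C ^ 2 + 2) - C)) := by
    apply aux_floor_div_sqrt
    have ht : Tendsto (fun B : ℕ =>
        2 * ((⌊C * Real.sqrt B⌋₊ : ℝ) / Real.sqrt B) + 1 / Real.sqrt B)
        atTop (nhds (2 * C + 0)) := (hu.const_mul 2).add hε
    have hg : Tendsto (fun B : ℕ =>
        (-(2 * ((⌊C * Real.sqrt B⌋₊ : ℝ) / Real.sqrt B) + 1 / Real.sqrt B) +
          Real.sqrt ((2 * ((⌊C * Real.sqrt B⌋₊ : ℝ) / Real.sqrt B) + 1 / Real.sqrt B) ^ 2 + 8)) / 2)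
        atTop (nhds ((-(2 * C + 0) + Real.sqrt ((2 * C + 0) ^ 2 + 8)) / 2)) :=
      (ht.neg.add ((ht.pow 2).add tendsto_const_nhds).sqrt).div_const 2
    have hval : ((-(2 * C + 0) + Real.sqrt ((2 * C + 0) ^ 2 + 8)) / 2)
        = Real.sqrt (C ^ 2 + 2) - C := by
      have h4 : Real.sqrt ((2 * C + 0) ^ 2 + 8) = 2 * Real.sqrt (C ^ 2 + 2) := by
        rw [show (2 * C + 0) ^ 2 + 8 = 2^2 * (C ^ 2 + 2) by ring,
          Real.sqrt_mul (by positivity), Real.sqrt_sq (by norm_num)]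
      rw [h4]; ring
    rw [hval] at hg
    refine hg.congr' ?_
    filter_upwards [eventually_ge_atTop 1] with B hB
    have hB0 : (0:ℝ) < B := by exact_mod_cast hB
    have hs : (0:ℝ) < Real.sqrt B := Real.sqrt_pos.mpr hB0
    have hss : Real.sqrt B * Real.sqrt B = (B:ℝ) := Real.mul_self_sqrt hB0.le
    have harg : (2 * ((⌊C * Real.sqrt B⌋₊ : ℝ) / Real.sqrt B) + 1 / Real.sqrt B) ^ 2 + 8
        = ((2 * (⌊C * Real.sqrt B⌋₊ : ℝ) + 1) ^ 2 + 8 * B) / B := by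
      rw [eq_div_iff hB0.ne']
      field_simp
      try nlinarith [hss]
    have hy : (0:ℝ) ≤ (2 * (⌊C * Real.sqrt B⌋₊ : ℝ) + 1) ^ 2 + 8 * B := by positivity
    rw [harg, Real.sqrt_div hy]
    rw [div_div, eq_div_iff (by positivity : (0:ℝ) < 2 * Real.sqrt B).ne']
    field_simp
  -- combine
  have hden : Real.sqrt (C ^ 2 + 2) ≠ 0 := (Real.sqrt_pos.mpr (by positivity)).ne'
  have hfin := (hu.add hp).div (hu.add hh) (by
    rw [show C + (Real.sqrt (C ^ 2 + 2) - C) = Real.sqrt (C ^ 2 + 2) by ring]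
    exact hden)
  rw [show C + (Real.sqrt (C ^ 2 + 2) - C) = Real.sqrt (C ^ 2 + 2) by ring] at hfin
  refine hfin.congr' ?_
  filter_upwards [eventually_ge_atTop 1] with B hB
  have hB0 : (0:ℝ) < B := by exact_mod_cast hB
  have hs : (0:ℝ) < Real.sqrt B := Real.sqrt_pos.mpr hB0
  simp only [Pi.div_apply]
  rw [← add_div, ← add_div, div_div_div_cancel_right₀]
  exact hs.ne'
end

section
/- If B is a positive integer and an algorithm for the shared memory switch with fractional packets is optimal, then there exists an optimal algorithm whose buffer never contains more than one fractional (non-integer-sized) packet at any time; consequently, there exists an optimal algorithm that uses only integer packets. -/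
/-- A (fractional) buffer-management schedule for a shared memory switch with
buffer size `B`, queues `0, …, N-1` and arrival sequence `σ` (number of unit
packets arriving to each queue on each slot). `q t j` is the (possibly
fractional) content of queue `j` after the admission phase of slot `t`:
contents are nonnegative, total occupancy is at most `B`, and between
consecutive slots each nonempty queue transmits at most one unit of packet mass
while arbitrary fractions may be accepted from arrivals or pushed out. -/
def FracSchedule (B N : ℕ) (σ : ℕ → ℕ → ℕ) (q : ℕ → ℕ → ℝ) : Prop :=
  (∀ t j, 0 ≤ q t j) ∧ (∀ t j, N ≤ j → q t j = 0) ∧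
  (∀ t, ∑ j ∈ Finset.range N, q t j ≤ B) ∧
  (∀ j, q 0 j ≤ σ 0 j) ∧
  (∀ t j, q (t + 1) j ≤ max (q t j - 1) 0 + σ (t + 1) j)

/-- Total transmitted packet mass (each nonempty queue transmits up to one unit
per slot, whole packets first) over the relevant horizon. -/
noncomputable def fracValue (B N T : ℕ) (q : ℕ → ℕ → ℝ) : ℝ :=
  ∑ t ∈ Finset.range (T + B + 1), ∑ j ∈ Finset.range N, min (q t j) 1



open Finset

def IsIntR (x : ℝ) : Prop := ∃ n : ℤ, x = (n : ℝ)

lemma isIntR_iff_fract {x : ℝ} : IsIntR x ↔ Int.fract x = 0 := by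
  constructor
  · rintro ⟨n, rfl⟩
    exact Int.fract_intCast n
  · intro h
    have h2 := Int.floor_add_fract x
    rw [h, add_zero] at h2
    exact ⟨⌊x⌋, h2.symm⟩

lemma isIntR_natCast (n : ℕ) : IsIntR (n : ℝ) := ⟨n, by norm_cast⟩

lemma isIntR_zero : IsIntR (0 : ℝ) := ⟨0, by norm_num⟩

lemma fract_eq_of_int_diff {x y : ℝ} (k : ℤ) (h : x - y = (k:ℝ)) :
    Int.fract x = Int.fract y := by
  rw [Int.fract_eq_fract]
  exact ⟨k, h⟩

lemma isIntR_iff_of_int_diff {x y : ℝ} (k : ℤ) (h : x - y = (k:ℝ)) :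
    (IsIntR x ↔ IsIntR y) := by
  rw [isIntR_iff_fract, isIntR_iff_fract, fract_eq_of_int_diff k h]

lemma not_isIntR_of_Ioo {x : ℝ} (h0 : 0 < x) (h1 : x < 1) : ¬ IsIntR x := by
  rintro ⟨n, rfl⟩
  have hn0 : (0:ℤ) < n := by exact_mod_cast h0
  have hn1 : n < 1 := by exact_mod_cast h1
  omega

lemma fract_pos_lt_one_of_not_int {x : ℝ} (h : ¬ IsIntR x) :
    0 < Int.fract x ∧ Int.fract x < 1 := by
  refine ⟨?_, Int.fract_lt_one x⟩
  rcases lt_or_eq_of_le (Int.fract_nonneg x) with h' | h'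
  · exact h'
  · exact absurd (isIntR_iff_fract.mpr h'.symm) h


lemma flow_exists {ι : Type} [DecidableEq ι] (E : Finset ι) (u v : ι → ℕ)
    (huv : ∀ c ∈ E, u c < v c)
    (hdeg : ∀ n : ℕ, (E.filter (fun c => u c = n ∨ v c = n)).card ≠ 1)
    (hne : E.Nonempty) :
    ∃ x : ι → ℝ, (∀ c, c ∉ E → x c = 0) ∧ (∃ c ∈ E, x c ≠ 0) ∧
      (∀ c, x c = 0 ∨ x c = 1 ∨ x c = -1) ∧
      (∀ n : ℕ, ∑ c ∈ E.filter (fun c => u c = n), x c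
              = ∑ c ∈ E.filter (fun c => v c = n), x c) := by
  classical
  by_cases hpar : ∃ c₁ ∈ E, ∃ c₂ ∈ E, c₁ ≠ c₂ ∧ u c₁ = u c₂ ∧ v c₁ = v c₂
  · obtain ⟨c₁, hc₁, c₂, hc₂, hne12, huu, hvv⟩ := hpar
    refine ⟨fun c => (if c = c₁ then (1:ℝ) else 0) + (if c = c₂ then (-1:ℝ) else 0), ?_, ?_, ?_, ?_⟩
    · intro c hc
      dsimp only
      rw [if_neg (fun h : c = c₁ => hc (h ▸ hc₁)), if_neg (fun h : c = c₂ => hc (h ▸ hc₂))]; ring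
    · exact ⟨c₁, hc₁, by dsimp only; rw [if_pos rfl, if_neg hne12]; norm_num⟩
    · intro c
      dsimp only
      by_cases h1 : c = c₁
      · subst h1; rw [if_pos rfl, if_neg hne12]; norm_num
      · by_cases h2 : c = c₂
        · subst h2; rw [if_neg h1, if_pos rfl]; norm_num
        · rw [if_neg h1, if_neg h2]; norm_num
    · intro n
      have key : ∀ (f : ι → ℕ), f c₁ = f c₂ →
          ∑ c ∈ E.filter (fun c => f c = n),
            ((if c = c₁ then (1:ℝ) else 0) + (if c = c₂ then (-1:ℝ) else 0)) = 0 := by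
        intro f hf
        rw [Finset.sum_add_distrib,
          Finset.sum_ite_eq' (E.filter (fun c => f c = n)) c₁ (fun _ => (1:ℝ)),
          Finset.sum_ite_eq' (E.filter (fun c => f c = n)) c₂ (fun _ => (-1:ℝ))]
        have hiff : c₁ ∈ E.filter (fun c => f c = n) ↔ c₂ ∈ E.filter (fun c => f c = n) := by
          simp only [Finset.mem_filter, hf]
          exact ⟨fun h => ⟨hc₂, h.2⟩, fun h => ⟨hc₁, h.2⟩⟩
        by_cases hm : c₁ ∈ E.filter (fun c => f c = n)
        · rw [if_pos hm, if_pos (hiff.mp hm)]; ring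
        · rw [if_neg hm, if_neg (fun h => hm (hiff.mpr h))]; ring
      rw [key u huu, key v hvv]
  · push_neg at hpar
    have hinj : ∀ c₁ ∈ E, ∀ c₂ ∈ E, u c₁ = u c₂ → v c₁ = v c₂ → c₁ = c₂ := by
      intro c₁ h₁ c₂ h₂ hu hv
      by_contra hne'
      exact (hpar c₁ h₁ c₂ h₂ hne') hu hv
    set M := E.sup v with hM
    have hvM : ∀ c ∈ E, v c ≤ M := fun c hc => Finset.le_sup hc
    have huM : ∀ c ∈ E, u c ≤ M := fun c hc => le_trans (le_of_lt (huv c hc)) (hvM c hc)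
    set Adj : ℕ → ℕ → Prop := fun a b => a ≠ b ∧ ∃ c ∈ E,
        (u c = a ∧ v c = b) ∨ (u c = b ∧ v c = a) with hAdjdef
    have hAdjsymm : ∀ a b, Adj a b → Adj b a := by
      rintro a b ⟨hab, c, hc, h⟩
      exact ⟨hab.symm, c, hc, h.symm⟩
    set Good : ℕ → Prop := fun l => ∃ ns : List ℕ, ns.Chain' Adj ∧ ns.Nodup ∧
        (∀ n ∈ ns, n ≤ M) ∧ ns.length = l with hGooddef
    have hGoodBound : ∀ l, Good l → l ≤ M + 1 := by
      rintro l ⟨ns, _, hnd, hbd, hlen⟩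
      have h1 : ns.toFinset ⊆ Finset.range (M+1) := by
        intro n hn
        rw [List.mem_toFinset] at hn
        exact Finset.mem_range.mpr (Nat.lt_succ_of_le (hbd n hn))
      calc l = ns.toFinset.card := by rw [List.toFinset_card_of_nodup hnd, hlen]
        _ ≤ (Finset.range (M+1)).card := Finset.card_le_card h1
        _ = M + 1 := Finset.card_range _
    obtain ⟨c₀, hc₀⟩ := hne
    have hv₀ : 1 ≤ v c₀ := Nat.one_le_iff_ne_zero.mpr (fun h => by
      have := huv c₀ hc₀; omega)
    have hM1 : 1 ≤ M := le_trans hv₀ (hvM c₀ hc₀)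
    have hGood2 : Good 2 := by
      refine ⟨[u c₀, v c₀], ?_, ?_, ?_, rfl⟩
      · exact List.isChain_cons_cons.mpr ⟨⟨Nat.ne_of_lt (huv c₀ hc₀), c₀, hc₀, Or.inl ⟨rfl, rfl⟩⟩,
          List.isChain_singleton _⟩
      · simp [Nat.ne_of_lt (huv c₀ hc₀)]
      · intro n hn
        rcases List.mem_pair.mp hn with h | h <;> subst h
        · exact huM c₀ hc₀
        · exact hvM c₀ hc₀
    set L := Nat.findGreatest Good (M+1) with hLdef
    have hL2 : 2 ≤ L := Nat.le_findGreatest (by omega) hGood2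
    have hGoodL : Good L := Nat.findGreatest_spec (P := Good) (by omega : 2 ≤ M+1) hGood2
    obtain ⟨ns, hch, hnd, hbd, hlen⟩ := hGoodL
    obtain ⟨a, b, tl, rfl⟩ : ∃ a b tl, ns = a :: b :: tl := by
      rcases ns with _ | ⟨a, _ | ⟨b, tl⟩⟩
      · simp at hlen; omega
      · simp at hlen; omega
      · exact ⟨a, b, tl, rfl⟩
    have hAdjab : Adj a b := (List.isChain_cons_cons.mp hch).1
    obtain ⟨hab, e₁, he₁E, he₁or⟩ := hAdjab
    have he₁S : e₁ ∈ E.filter (fun c => u c = a ∨ v c = a) := by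
      rw [Finset.mem_filter]
      refine ⟨he₁E, ?_⟩
      rcases he₁or with ⟨h1, _⟩ | ⟨_, h2⟩
      · exact Or.inl h1
      · exact Or.inr h2
    have hcard : 1 < (E.filter (fun c => u c = a ∨ v c = a)).card := by
      have h1 : 0 < (E.filter (fun c => u c = a ∨ v c = a)).card :=
        Finset.card_pos.mpr ⟨e₁, he₁S⟩
      have h2 := hdeg a
      omega
    obtain ⟨c', hc'S, hc'ne⟩ := Finset.exists_mem_ne hcard e₁
    have hc'E : c' ∈ E := (Finset.mem_filter.mp hc'S).1
    have hc'inc : u c' = a ∨ v c' = a := (Finset.mem_filter.mp hc'S).2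
    obtain ⟨w, hw⟩ : ∃ w, (u c' = a ∧ v c' = w) ∨ (u c' = w ∧ v c' = a) := by
      rcases hc'inc with h | h
      · exact ⟨v c', Or.inl ⟨h, rfl⟩⟩
      · exact ⟨u c', Or.inr ⟨rfl, h⟩⟩
    have hwa : w ≠ a := by
      intro h
      have := huv c' hc'E
      rcases hw with ⟨h1, h2⟩ | ⟨h1, h2⟩ <;> omega
    have hAdjaw : Adj a w := ⟨Ne.symm hwa, c', hc'E, hw⟩
    have hwM : w ≤ M := by
      rcases hw with ⟨_, h2⟩ | ⟨h1, _⟩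
      · exact h2 ▸ hvM c' hc'E
      · exact h1 ▸ huM c' hc'E
    have hwb : w ≠ b := by
      intro h
      subst h
      have h1 := huv c' hc'E
      have h2 := huv e₁ he₁E
      rcases hw with ⟨g1, g2⟩ | ⟨g1, g2⟩ <;> rcases he₁or with ⟨f1, f2⟩ | ⟨f1, f2⟩
      · exact hc'ne (hinj c' hc'E e₁ he₁E (g1.trans f1.symm) (g2.trans f2.symm))
      · omega
      · omega
      · exact hc'ne (hinj c' hc'E e₁ he₁E (g1.trans f1.symm) (g2.trans f2.symm))
    by_cases hwns : w ∈ a :: b :: tl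
    case neg =>
      exfalso
      have hGoodL1 : Good (L+1) := by
        refine ⟨w :: a :: b :: tl, ?_, ?_, ?_, by simp [← hlen]⟩
        · exact List.isChain_cons_cons.mpr ⟨hAdjsymm _ _ hAdjaw, hch⟩
        · exact List.nodup_cons.mpr ⟨hwns, hnd⟩
        · intro n hn
          rcases List.mem_cons.mp hn with h | h
          · exact h ▸ hwM
          · exact hbd n h
      exact absurd hGoodL1
        (Nat.findGreatest_is_greatest (by omega) (hGoodBound _ hGoodL1))
    case pos =>
    obtain ⟨i, hi⟩ := List.mem_iff_get.mp hwns
    obtain ⟨iv, hivlt⟩ := i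
    have hi2 : 2 ≤ iv := by
      by_contra hcon
      push_neg at hcon
      interval_cases iv
      · exact hwa hi.symm
      · exact hwb hi.symm
    set L' := iv + 1 with hL'def
    haveI : NeZero L' := ⟨by omega⟩
    haveI : Fact (1 < L') := ⟨by omega⟩
    set C := (a :: b :: tl).take L' with hCdef
    have hilen : iv < (a :: b :: tl).length := hivlt
    have hCl : C.length = L' := by
      rw [hCdef, List.length_take]
      omega
    have hCnd : C.Nodup := List.Nodup.sublist (List.take_sublist _ _) hnd
    have hget : ∀ (k : ℕ) (hk : k < L'),
        C.get ⟨k, by rw [hCl]; exact hk⟩ = (a :: b :: tl).get ⟨k, by omega⟩ := by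
      intro k hk
      simp [hCdef]
    have hchC : C.Chain' Adj := by
      rw [List.Chain', List.isChain_iff_getElem]
      intro k hk
      rw [hCl] at hk
      have e1 := hget k (by omega)
      have e2 := hget (k+1) (by omega)
      simp only [List.get_eq_getElem] at e1 e2
      rw [e1, e2]
      exact List.isChain_iff_getElem.mp hch k (by omega)
    have hC0 : C.get ⟨0, by rw [hCl]; omega⟩ = a := by
      rw [hget 0 (by omega)]
      rfl
    have hClast : C.get ⟨iv, by rw [hCl]; omega⟩ = w := by
      rw [hget iv (by omega)]
      exact hi
    set p : ZMod L' → ℕ := fun k => C.get ⟨k.val, by rw [hCl]; exact ZMod.val_lt k⟩ with hpdef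
    have hpinj : Function.Injective p := by
      intro k l h
      have h2 := List.nodup_iff_injective_get.mp hCnd h
      have h3 : k.val = l.val := by simpa using h2
      exact ZMod.val_injective _ h3
    have hp0 : p 0 = a := by
      have : (0 : ZMod L').val = 0 := ZMod.val_zero
      simp only [hpdef, this]
      exact hC0
    have hpsucc : ∀ k : ZMod L', Adj (p k) (p (k + 1)) := by
      intro k
      have hkv : k.val < L' := ZMod.val_lt k
      by_cases hk : k.val + 1 < L'
      · have hone : (1 : ZMod L').val = 1 := ZMod.val_one L'
        have hsv : (k+1).val = k.val + 1 := by
          rw [ZMod.val_add_of_lt (by rw [hone]; omega), hone]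
        have := List.isChain_iff_getElem.mp hchC k.val (by rw [hCl]; omega)
        simp only [hpdef, hsv]
        convert this using 2 <;> simp
      · have hkv' : k.val = iv := by omega
        have hk10 : k + 1 = 0 := by
          have e1 : ((k.val : ℕ) : ZMod L') = k := ZMod.natCast_rightInverse k
          have e2 : ((k.val + 1 : ℕ) : ZMod L') = k + 1 := by push_cast [e1]; ring
          rw [← e2, hkv']
          show ((L' : ℕ) : ZMod L') = 0
          exact ZMod.natCast_self L'
        rw [hk10, hp0]
        apply hAdjsymm
        have : p k = w := by
          simp only [hpdef, hkv']
          exact hClast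
        rw [this]
        exact hAdjaw
    have hpne : ∀ k, p k ≠ p (k+1) := fun k => (hpsucc k).1
    set pick : ZMod L' → ι := fun k => (hpsucc k).2.choose with hpickdef
    have hpick : ∀ k, pick k ∈ E ∧ ((u (pick k) = p k ∧ v (pick k) = p (k+1)) ∨
        (u (pick k) = p (k+1) ∧ v (pick k) = p k)) := by
      intro k
      exact ⟨(hpsucc k).2.choose_spec.1, (hpsucc k).2.choose_spec.2⟩
    have htwo : ¬ (L' ∣ 2) := by
      intro h
      have := Nat.le_of_dvd (by omega) h
      omega
    have hpickinj : ∀ k l, pick k = pick l → k = l := by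
      intro k l h
      rcases (hpick k).2 with ⟨hk1, hk2⟩ | ⟨hk1, hk2⟩ <;>
        rcases (hpick l).2 with ⟨hl1, hl2⟩ | ⟨hl1, hl2⟩ <;>
        rw [h] at hk1 hk2
      · exact hpinj (hk1.symm.trans hl1)
      · exfalso
        have e1 : k = l + 1 := hpinj (hk1.symm.trans hl1)
        have e2 : k + 1 = l := hpinj (hk2.symm.trans hl2)
        have h3 : l + 1 + 1 = l := by rw [← e1]; exact e2
        have h4 : (2 : ZMod L') = 0 := by
          calc (2:ZMod L') = (l + 1 + 1) - l := by ring
            _ = l - l := by rw [h3]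
            _ = 0 := by ring
        rw [show ((2:ZMod L')) = ((2:ℕ) : ZMod L') by push_cast; ring] at h4
        exact htwo ((ZMod.natCast_eq_zero_iff 2 L').mp h4)
      · exfalso
        have e1 : k = l + 1 := hpinj (hk2.symm.trans hl2)
        have e2 : k + 1 = l := hpinj (hk1.symm.trans hl1)
        have h3 : l + 1 + 1 = l := by rw [← e1]; exact e2
        have h4 : (2 : ZMod L') = 0 := by
          calc (2:ZMod L') = (l + 1 + 1) - l := by ring
            _ = l - l := by rw [h3]
            _ = 0 := by ring
        rw [show ((2:ZMod L')) = ((2:ℕ) : ZMod L') by push_cast; ring] at h4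
        exact htwo ((ZMod.natCast_eq_zero_iff 2 L').mp h4)
      · have := hpinj (hk1.symm.trans hl1)
        exact add_right_cancel this
    set orient : ZMod L' → ℝ := fun k => if u (pick k) = p k then 1 else -1 with horientdef
    have horient : ∀ k, orient k = 1 ∨ orient k = -1 := by
      intro k
      by_cases h : u (pick k) = p k
      · exact Or.inl (if_pos h)
      · exact Or.inr (if_neg h)
    set x : ι → ℝ := fun c => ∑ k : ZMod L', if pick k = c then orient k else 0 with hxdef
    have hxval : ∀ c, (∃ k, pick k = c) → ∀ k, pick k = c → x c = orient k := by
      intro c _ k hk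
      rw [hxdef]
      simp only
      rw [Finset.sum_eq_single_of_mem k (Finset.mem_univ k)]
      · rw [if_pos hk]
      · intro l _ hl
        rw [if_neg]
        intro h
        exact hl (hpickinj l k (h.trans hk.symm))
    have hxzero : ∀ c, (∀ k, pick k ≠ c) → x c = 0 := by
      intro c hc
      rw [hxdef]
      simp only
      rw [Finset.sum_eq_zero]
      intro l _
      rw [if_neg (hc l)]
    refine ⟨x, ?_, ?_, ?_, ?_⟩
    · intro c hc
      apply hxzero
      intro k hk
      exact hc (hk ▸ (hpick k).1)
    · refine ⟨pick 0, (hpick 0).1, ?_⟩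
      rw [hxval (pick 0) ⟨0, rfl⟩ 0 rfl]
      rcases horient 0 with h | h <;> rw [h] <;> norm_num
    · intro c
      by_cases hc : ∃ k, pick k = c
      · obtain ⟨k, hk⟩ := hc
        rw [hxval c ⟨k, hk⟩ k hk]
        rcases horient k with h | h
        · exact Or.inr (Or.inl h)
        · exact Or.inr (Or.inr h)
      · push_neg at hc
        exact Or.inl (hxzero c hc)
    · intro n
      have edgesum : ∀ (f : ι → ℕ), ∑ c ∈ E.filter (fun c => f c = n), x c
          = ∑ k : ZMod L', (if f (pick k) = n then orient k else 0) := by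
        intro f
        rw [hxdef]
        simp only
        rw [Finset.sum_comm]
        apply Finset.sum_congr rfl
        intro k _
        have inner : ∑ c ∈ E.filter (fun c => f c = n), (if pick k = c then orient k else 0)
            = if pick k ∈ E.filter (fun c => f c = n) then orient k else 0 :=
          Finset.sum_ite_eq (E.filter (fun c => f c = n)) (pick k) (fun _ => orient k)
        rw [inner]
        by_cases h : f (pick k) = n
        · have hm : pick k ∈ E.filter (fun c => f c = n) :=
            Finset.mem_filter.mpr ⟨(hpick k).1, h⟩
          rw [if_pos hm, if_pos h]
        · have hnm : pick k ∉ E.filter (fun c => f c = n) := by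
            rw [Finset.mem_filter]
            exact fun hm => h hm.2
          rw [if_neg hnm, if_neg h]
      rw [edgesum u, edgesum v, ← sub_eq_zero, ← Finset.sum_sub_distrib]
      have keyterm : ∀ k, (if u (pick k) = n then orient k else 0)
            - (if v (pick k) = n then orient k else 0)
          = (if p k = n then (1:ℝ) else 0) - (if p (k+1) = n then 1 else 0) := by
        intro k
        rcases (hpick k).2 with ⟨h1, h2⟩ | ⟨h1, h2⟩
        · have ho : orient k = 1 := if_pos h1
          rw [h1, h2, ho]
        · have ho : orient k = -1 := if_neg (by rw [h1]; exact (hpne k).symm)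
          rw [h1, h2, ho]
          by_cases ha : p k = n <;> by_cases hb : p (k+1) = n <;>
            simp [ha, hb]
      rw [Finset.sum_congr rfl (fun k _ => keyterm k), Finset.sum_sub_distrib]
      have hrot : ∑ k : ZMod L', (if p (k+1) = n then (1:ℝ) else 0)
          = ∑ k : ZMod L', (if p k = n then (1:ℝ) else 0) := by
        exact Fintype.sum_equiv (Equiv.addRight (1 : ZMod L'))
          (fun k => if p (k+1) = n then (1:ℝ) else 0)
          (fun k => if p k = n then (1:ℝ) else 0)
          (fun k => rfl)
      rw [hrot, sub_self]

namespace SMS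

attribute [local instance] Classical.propDecidable

variable (B N T : ℕ) (σ : ℕ → ℕ → ℕ) (q : ℕ → ℕ → ℝ)

/-- link relation: the transition constraint from slot `t` to `t+1` in queue `j`
is tight, with queue content above 1. -/
def lk (t j : ℕ) : Prop :=
  q (t+1) j = max (q t j - 1) 0 + (σ (t+1) j : ℝ) ∧ 1 < q t j

open Classical in
/-- root (chain start time) of the coordinate `(t,j)` -/
noncomputable def rt (j : ℕ) : ℕ → ℕ
  | 0 => 0
  | t+1 => if lk σ q t j then rt j t else t+1

lemma rt_zero (j : ℕ) : rt σ q j 0 = 0 := rfl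

lemma rt_succ_lk {t j : ℕ} (h : lk σ q t j) : rt σ q j (t+1) = rt σ q j t := by
  rw [rt, if_pos h]

lemma rt_succ_nlk {t j : ℕ} (h : ¬ lk σ q t j) : rt σ q j (t+1) = t + 1 := by
  rw [rt, if_neg h]

lemma rt_le (j t : ℕ) : rt σ q j t ≤ t := by
  induction t with
  | zero => exact le_refl 0
  | succ t ih =>
    by_cases h : lk σ q t j
    · rw [rt_succ_lk σ q h]; omega
    · rw [rt_succ_nlk σ q h]

lemma rt_lk {j : ℕ} : ∀ {t s : ℕ}, rt σ q j t ≤ s → s < t → lk σ q s j := by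
  intro t
  induction t with
  | zero => intro s _ h; omega
  | succ t ih =>
    intro s h1 h2
    by_cases h : lk σ q t j
    · rw [rt_succ_lk σ q h] at h1
      rcases Nat.lt_succ_iff_lt_or_eq.mp h2 with h' | h'
      · exact ih h1 h'
      · exact h' ▸ h
    · rw [rt_succ_nlk σ q h] at h1
      omega

lemma rt_interval {j : ℕ} : ∀ {t s : ℕ}, rt σ q j t ≤ s → s ≤ t → rt σ q j s = rt σ q j t := by
  intro t
  induction t with
  | zero =>
    intro s h1 h2
    have hs : s = 0 := by omega
    subst hs; rfl
  | succ t ih =>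
    intro s h1 h2
    by_cases h : lk σ q t j
    · rw [rt_succ_lk σ q h] at h1 ⊢
      rcases Nat.le_succ_iff.mp h2 with h' | h'
      · exact ih h1 h'
      · subst h'; exact rt_succ_lk σ q h
    · rw [rt_succ_nlk σ q h] at h1 ⊢
      have hs : s = t + 1 := by omega
      subst hs; exact rt_succ_nlk σ q h

lemma rt_idem (j t : ℕ) : rt σ q j (rt σ q j t) = rt σ q j t :=
  rt_interval σ q (le_refl _) (rt_le σ q j t)

lemma lk_diff {t j : ℕ} (h : lk σ q t j) :
    q (t+1) j - q t j = ((σ (t+1) j : ℤ) - 1 : ℤ) := by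
  obtain ⟨heq, hgt⟩ := h
  have : max (q t j - 1) 0 = q t j - 1 := max_eq_left (by linarith)
  rw [heq, this]
  push_cast
  ring

lemma rt_diff {j : ℕ} : ∀ {t s : ℕ}, rt σ q j t ≤ s → s ≤ t →
    ∃ k : ℤ, q t j - q s j = (k : ℝ) := by
  intro t
  induction t with
  | zero =>
    intro s h1 h2
    have hs : s = 0 := by omega
    subst hs
    exact ⟨0, by norm_num⟩
  | succ t ih =>
    intro s h1 h2
    rcases Nat.le_succ_iff.mp h2 with h' | h'
    · have hlk : lk σ q t j := rt_lk σ q (le_trans h1 h') (by omega)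
      rw [rt_succ_lk σ q hlk] at h1
      obtain ⟨k, hk⟩ := ih h1 h'
      obtain hd := lk_diff σ q hlk
      exact ⟨(σ (t+1) j : ℤ) - 1 + k, by push_cast at hd ⊢; linarith⟩
    · exact ⟨0, by rw [h']; push_cast; ring⟩

lemma rt_fract {j t s : ℕ} (h1 : rt σ q j t ≤ s) (h2 : s ≤ t) :
    Int.fract (q s j) = Int.fract (q t j) := by
  obtain ⟨k, hk⟩ := rt_diff σ q h1 h2
  exact (fract_eq_of_int_diff k hk).symm

lemma rt_isint {j t s : ℕ} (h1 : rt σ q j t ≤ s) (h2 : s ≤ t) :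
    IsIntR (q s j) ↔ IsIntR (q t j) := by
  obtain ⟨k, hk⟩ := rt_diff σ q h1 h2
  exact (isIntR_iff_of_int_diff k hk).symm


def hor : ℕ := T + B + 1

open Classical in
noncomputable def Fset : Finset (ℕ × ℕ) :=
  ((range (hor B T)) ×ˢ (range N)).filter fun p => ¬ IsIntR (q p.1 p.2)

def TightB (t : ℕ) : Prop := (∑ j ∈ range N, q t j) = (B : ℝ)

def TightT (t j : ℕ) : Prop := q (t+1) j = max (q t j - 1) 0 + (σ (t+1) j : ℝ)

open Classical in
noncomputable def iIdx (r : ℕ) : ℕ :=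
  ((range (hor B T)).filter fun s => TightB B N q s ∧ s ≤ r).card

noncomputable def crep (p : ℕ × ℕ) : ℕ × ℕ := (rt σ q p.2 p.1, p.2)

noncomputable def Eset : Finset (ℕ × ℕ) := (Fset B N T q).image (crep σ q)

def HasTight (c : ℕ × ℕ) : Prop := ∃ s, TightB B N q s ∧ rt σ q c.2 s = c.1

noncomputable def frC (c : ℕ × ℕ) : ℕ := sInf {s | TightB B N q s ∧ rt σ q c.2 s = c.1}

open Classical in
noncomputable def lrC (c : ℕ × ℕ) : ℕ :=
  Nat.findGreatest (fun s => TightB B N q s ∧ rt σ q c.2 s = c.1) (hor B T)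

noncomputable def uC (c : ℕ × ℕ) : ℕ := iIdx B N T q (frC B N σ q c) - 1

noncomputable def vC (c : ℕ × ℕ) : ℕ := iIdx B N T q (lrC B N T σ q c)

noncomputable def mval (r : ℕ) : ℝ := ∑ j ∈ range N, Int.fract (q r j)

section TightLemmas

variable {B N T : ℕ} {σ : ℕ → ℕ → ℕ} {q : ℕ → ℕ → ℝ}

lemma tight_lt_hor (hB : 0 < B) (htr : ∀ t j, hor B T ≤ t ∨ N ≤ j → q t j = 0)
    {r : ℕ} (hr : TightB B N q r) : r < hor B T := by
  by_contra h
  push_neg at h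
  unfold TightB at hr
  rw [Finset.sum_eq_zero (fun j _ => htr r j (Or.inl h))] at hr
  have : (B:ℝ) ≠ 0 := by positivity
  exact this hr.symm

lemma iIdx_sub {r r' : ℕ} (h : r ≤ r') :
    ((range (hor B T)).filter fun s => TightB B N q s ∧ s ≤ r)
    ⊆ ((range (hor B T)).filter fun s => TightB B N q s ∧ s ≤ r') := by
  intro s hs
  rw [Finset.mem_filter] at hs ⊢
  exact ⟨hs.1, hs.2.1, le_trans hs.2.2 h⟩

lemma iIdx_mono {r r' : ℕ} (h : r ≤ r') : iIdx B N T q r ≤ iIdx B N T q r' :=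
  Finset.card_le_card (iIdx_sub h)

lemma iIdx_lt (hB : 0 < B) (htr : ∀ t j, hor B T ≤ t ∨ N ≤ j → q t j = 0)
    {r r' : ℕ} (h : r < r') (hr' : TightB B N q r') : iIdx B N T q r < iIdx B N T q r' := by
  classical
  apply Finset.card_lt_card
  rw [Finset.ssubset_iff_of_subset (iIdx_sub (le_of_lt h))]
  refine ⟨r', Finset.mem_filter.mpr ⟨Finset.mem_range.mpr (tight_lt_hor hB htr hr'), hr', le_refl _⟩, ?_⟩
  intro hmem
  have := (Finset.mem_filter.mp hmem).2.2
  omega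

lemma iIdx_inj (hB : 0 < B) (htr : ∀ t j, hor B T ≤ t ∨ N ≤ j → q t j = 0)
    {r r' : ℕ} (hr : TightB B N q r) (hr' : TightB B N q r')
    (h : iIdx B N T q r = iIdx B N T q r') : r = r' := by
  rcases lt_trichotomy r r' with h' | h' | h'
  · exact absurd h (Nat.ne_of_lt (iIdx_lt hB htr h' hr'))
  · exact h'
  · exact absurd h.symm (Nat.ne_of_lt (iIdx_lt hB htr h' hr))

lemma iIdx_pos (hB : 0 < B) (htr : ∀ t j, hor B T ≤ t ∨ N ≤ j → q t j = 0)
    {r : ℕ} (hr : TightB B N q r) : 1 ≤ iIdx B N T q r := by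
  rw [Nat.one_le_iff_ne_zero, ← Nat.pos_iff_ne_zero]
  apply Finset.card_pos.mpr
  exact ⟨r, Finset.mem_filter.mpr ⟨Finset.mem_range.mpr (tight_lt_hor hB htr hr), hr, le_refl _⟩⟩

lemma tight_pred (hB : 0 < B) (htr : ∀ t j, hor B T ≤ t ∨ N ≤ j → q t j = 0)
    {r' : ℕ} (hr' : TightB B N q r') (h2 : 2 ≤ iIdx B N T q r') :
    ∃ p, TightB B N q p ∧ p < r' ∧ iIdx B N T q p + 1 = iIdx B N T q r' := by
  have hcard : 1 < ((range (hor B T)).filter fun s => TightB B N q s ∧ s ≤ r').card :=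
    lt_of_lt_of_le one_lt_two h2
  obtain ⟨s₀, hs₀, hs₀ne⟩ := Finset.exists_mem_ne hcard r'
  rw [Finset.mem_filter] at hs₀
  have hs₀lt : s₀ < r' := lt_of_le_of_ne hs₀.2.2 hs₀ne
  set p := Nat.findGreatest (fun s => TightB B N q s ∧ s < r') r' with hp
  have hps : TightB B N q p ∧ p < r' :=
    Nat.findGreatest_spec (P := fun s => TightB B N q s ∧ s < r') (le_of_lt hs₀lt) ⟨hs₀.2.1, hs₀lt⟩
  refine ⟨p, hps.1, hps.2, ?_⟩
  have hset : (range (hor B T)).filter (fun s => TightB B N q s ∧ s ≤ p)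
      = ((range (hor B T)).filter fun s => TightB B N q s ∧ s ≤ r').erase r' := by
    ext s
    rw [Finset.mem_erase, Finset.mem_filter, Finset.mem_filter]
    constructor
    · rintro ⟨hrange, htight, hle⟩
      have : s < r' := lt_of_le_of_lt hle hps.2
      exact ⟨Nat.ne_of_lt this, hrange, htight, le_of_lt this⟩
    · rintro ⟨hne, hrange, htight, hle⟩
      have hslt : s < r' := lt_of_le_of_ne hle hne
      refine ⟨hrange, htight, ?_⟩
      by_contra hgt
      push_neg at hgt
      exact Nat.findGreatest_is_greatest hgt (le_of_lt hslt) ⟨htight, hslt⟩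
    
  have hmem : r' ∈ (range (hor B T)).filter fun s => TightB B N q s ∧ s ≤ r' :=
    Finset.mem_filter.mpr ⟨Finset.mem_range.mpr (tight_lt_hor hB htr hr'), hr', le_refl _⟩
  have : iIdx B N T q p = iIdx B N T q r' - 1 := by
    unfold iIdx
    rw [hset, Finset.card_erase_of_mem hmem]
  omega

lemma tight_exists_iIdx (hB : 0 < B) (htr : ∀ t j, hor B T ≤ t ∨ N ≤ j → q t j = 0) :
    ∀ (d r k : ℕ), TightB B N q r → 1 ≤ k → iIdx B N T q r = k + d →
    ∃ p, TightB B N q p ∧ iIdx B N T q p = k := by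
  intro d
  induction d with
  | zero => exact fun r k hr hk h => ⟨r, hr, by omega⟩
  | succ d ih =>
    intro r k hr hk h
    obtain ⟨p, hp, _, hpi⟩ := tight_pred hB htr hr (by omega)
    exact ih p k hp hk (by omega)

lemma E_elim {c : ℕ × ℕ} (hc : c ∈ Eset B N T σ q) :
    rt σ q c.2 c.1 = c.1 ∧ ¬ IsIntR (q c.1 c.2) ∧ c.2 < N ∧ c.1 < hor B T := by
  obtain ⟨p, hp, hcrep⟩ := Finset.mem_image.mp hc
  simp only [Fset, Finset.mem_filter, Finset.mem_product, Finset.mem_range] at hp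
  obtain ⟨⟨ht, hj⟩, hfrac⟩ := hp
  subst hcrep
  simp only [crep]
  refine ⟨rt_idem σ q _ _, ?_, hj, lt_of_le_of_lt (rt_le σ q _ _) ht⟩
  intro hint
  exact hfrac ((rt_isint σ q (le_refl _) (rt_le σ q p.2 p.1)).mp hint)

lemma fct_mem {c : ℕ × ℕ} (hc : c ∈ Eset B N T σ q) :
    0 < Int.fract (q c.1 c.2) ∧ Int.fract (q c.1 c.2) < 1 :=
  fract_pos_lt_one_of_not_int (E_elim hc).2.1

lemma cross_frac {c : ℕ × ℕ} (hc : c ∈ Eset B N T σ q) {s : ℕ}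
    (hs : rt σ q c.2 s = c.1) :
    ¬ IsIntR (q s c.2) ∧ Int.fract (q s c.2) = Int.fract (q c.1 c.2) := by
  obtain ⟨hroot, hfrac, _, _⟩ := E_elim hc
  have h1 : rt σ q c.2 s ≤ c.1 := le_of_eq hs
  have h2 : c.1 ≤ s := hs ▸ rt_le σ q c.2 s
  refine ⟨?_, (rt_fract σ q h1 h2).symm⟩
  intro hint
  exact hfrac ((rt_isint σ q h1 h2).mpr hint)

lemma frC_spec {c : ℕ × ℕ} (hHT : HasTight B N σ q c) :
    TightB B N q (frC B N σ q c) ∧ rt σ q c.2 (frC B N σ q c) = c.1 :=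
  Nat.sInf_mem hHT

lemma frC_min {c : ℕ × ℕ} {s : ℕ} (hts : TightB B N q s) (hrs : rt σ q c.2 s = c.1) :
    frC B N σ q c ≤ s :=
  Nat.sInf_le ⟨hts, hrs⟩

lemma lrC_spec (hB : 0 < B) (htr : ∀ t j, hor B T ≤ t ∨ N ≤ j → q t j = 0)
    {c : ℕ × ℕ} (hHT : HasTight B N σ q c) :
    TightB B N q (lrC B N T σ q c) ∧ rt σ q c.2 (lrC B N T σ q c) = c.1 := by
  obtain ⟨s, hs1, hs2⟩ := hHT
  exact Nat.findGreatest_spec (P := fun s => TightB B N q s ∧ rt σ q c.2 s = c.1)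
    (le_of_lt (tight_lt_hor hB htr hs1)) ⟨hs1, hs2⟩

lemma lrC_max (hB : 0 < B) (htr : ∀ t j, hor B T ≤ t ∨ N ≤ j → q t j = 0)
    {c : ℕ × ℕ} {s : ℕ} (hts : TightB B N q s) (hrs : rt σ q c.2 s = c.1) :
    s ≤ lrC B N T σ q c :=
  Nat.le_findGreatest (le_of_lt (tight_lt_hor hB htr hts)) ⟨hts, hrs⟩

lemma frC_le_lrC (hB : 0 < B) (htr : ∀ t j, hor B T ≤ t ∨ N ≤ j → q t j = 0)
    {c : ℕ × ℕ} (hHT : HasTight B N σ q c) :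
    frC B N σ q c ≤ lrC B N T σ q c := by
  obtain ⟨h1, h2⟩ := lrC_spec hB htr hHT
  exact frC_min h1 h2

lemma cross_iff (hB : 0 < B) (htr : ∀ t j, hor B T ≤ t ∨ N ≤ j → q t j = 0)
    {c : ℕ × ℕ} (hc : c ∈ Eset B N T σ q) (hHT : HasTight B N σ q c)
    {s : ℕ} (hs : TightB B N q s) :
    rt σ q c.2 s = c.1 ↔ (frC B N σ q c ≤ s ∧ s ≤ lrC B N T σ q c) := by
  constructor
  · exact fun h => ⟨frC_min hs h, lrC_max hB htr hs h⟩
  · rintro ⟨h1, h2⟩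
    obtain ⟨hl1, hl2⟩ := lrC_spec hB htr hHT
    have hc1 : c.1 ≤ frC B N σ q c := by
      obtain ⟨hf1, hf2⟩ := frC_spec hHT
      exact hf2 ▸ rt_le σ q c.2 (frC B N σ q c)
    exact (rt_interval σ q (t := lrC B N T σ q c) (s := s)
      (by rw [hl2]; exact le_trans hc1 h1) h2).trans hl2

lemma m_int {r : ℕ} (hr : TightB B N q r) : ∃ z : ℤ, mval N q r = (z : ℝ) := by
  refine ⟨(B : ℤ) - ∑ j ∈ range N, ⌊q r j⌋, ?_⟩
  unfold mval
  rw [Finset.sum_congr rfl (fun j _ => (Int.self_sub_floor (q r j)).symm),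
    Finset.sum_sub_distrib]
  unfold TightB at hr
  rw [hr]
  push_cast
  ring

lemma m_as_chains (hB : 0 < B) (htr : ∀ t j, hor B T ≤ t ∨ N ≤ j → q t j = 0)
    (hHT : ∀ c ∈ Eset B N T σ q, HasTight B N σ q c) {r : ℕ} (hr : TightB B N q r) :
    mval N q r = ∑ c ∈ (Eset B N T σ q).filter
      (fun c => frC B N σ q c ≤ r ∧ r ≤ lrC B N T σ q c), Int.fract (q c.1 c.2) := by
  have step1 : mval N q r
      = ∑ j ∈ (range N).filter (fun j => ¬ IsIntR (q r j)), Int.fract (q r j) := by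
    unfold mval
    rw [Finset.sum_filter_of_ne]
    intro j _ hne hint
    exact hne (isIntR_iff_fract.mp hint)
  rw [step1]
  have hmemE : ∀ j, j < N → ¬ IsIntR (q r j) → (rt σ q j r, j) ∈ Eset B N T σ q := by
    intro j hj hint
    refine Finset.mem_image.mpr ⟨(r, j), ?_, rfl⟩
    simp only [Fset, Finset.mem_filter, Finset.mem_product, Finset.mem_range]
    exact ⟨⟨tight_lt_hor hB htr hr, hj⟩, hint⟩
  have hcross : ∀ c ∈ (Eset B N T σ q).filter
      (fun c => frC B N σ q c ≤ r ∧ r ≤ lrC B N T σ q c), rt σ q c.2 r = c.1 := by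
    intro c hcf
    rw [Finset.mem_filter] at hcf
    exact (cross_iff hB htr hcf.1 (hHT c hcf.1) hr).mpr hcf.2
  refine Finset.sum_nbij' (fun j => (rt σ q j r, j)) (fun c => c.2) ?_ ?_ ?_ ?_ ?_
  · intro j hj
    rw [Finset.mem_filter, Finset.mem_range] at hj
    rw [Finset.mem_filter]
    refine ⟨hmemE j hj.1 hj.2, frC_min hr rfl, lrC_max hB htr hr rfl⟩
  · intro c hcf
    have h1 := hcross c hcf
    rw [Finset.mem_filter] at hcf
    rw [Finset.mem_filter, Finset.mem_range]
    exact ⟨(E_elim hcf.1).2.2.1, (cross_frac hcf.1 h1).1⟩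
  · intro j _
    rfl
  · intro c hcf
    have h1 := hcross c hcf
    rw [Finset.mem_filter] at hcf
    exact Prod.ext h1 rfl
  · intro j hj
    rw [Finset.mem_filter, Finset.mem_range] at hj
    exact ((cross_frac (hmemE j hj.1 hj.2) rfl).2)

lemma conservation (hB : 0 < B) (htr : ∀ t j, hor B T ≤ t ∨ N ≤ j → q t j = 0)
    (hHT : ∀ c ∈ Eset B N T σ q, HasTight B N σ q c) {p p' : ℕ}
    (hp : TightB B N q p) (hp' : TightB B N q p') (hlt : p < p')
    (hadj : iIdx B N T q p + 1 = iIdx B N T q p') :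
    mval N q p' - mval N q p
      = (∑ c ∈ (Eset B N T σ q).filter (fun c => frC B N σ q c = p'), Int.fract (q c.1 c.2))
      - ∑ c ∈ (Eset B N T σ q).filter (fun c => lrC B N T σ q c = p), Int.fract (q c.1 c.2) := by
  have hA' : (Eset B N T σ q).filter (fun c => frC B N σ q c ≤ p' ∧ p' ≤ lrC B N T σ q c)
      = (Eset B N T σ q).filter (fun c => frC B N σ q c ≤ p ∧ p' ≤ lrC B N T σ q c)
        ∪ (Eset B N T σ q).filter (fun c => frC B N σ q c = p') := by
    ext c
    simp only [Finset.mem_union, Finset.mem_filter]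
    constructor
    · rintro ⟨hcE, h1, h2⟩
      by_cases hle : frC B N σ q c ≤ p
      · exact Or.inl ⟨hcE, hle, h2⟩
      · push_neg at hle
        refine Or.inr ⟨hcE, ?_⟩
        have hfrt : TightB B N q (frC B N σ q c) := (frC_spec (hHT c hcE)).1
        have hi1 : iIdx B N T q p < iIdx B N T q (frC B N σ q c) := iIdx_lt hB htr hle hfrt
        have hi2 : iIdx B N T q (frC B N σ q c) ≤ iIdx B N T q p' := iIdx_mono h1
        exact iIdx_inj hB htr hfrt hp' (by omega)
    · rintro (⟨hcE, h1, h2⟩ | ⟨hcE, heq⟩)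
      · exact ⟨hcE, le_trans h1 (le_of_lt hlt), h2⟩
      · exact ⟨hcE, le_of_eq heq, heq ▸ frC_le_lrC hB htr (hHT c hcE)⟩
  have hA : (Eset B N T σ q).filter (fun c => frC B N σ q c ≤ p ∧ p ≤ lrC B N T σ q c)
      = (Eset B N T σ q).filter (fun c => frC B N σ q c ≤ p ∧ p' ≤ lrC B N T σ q c)
        ∪ (Eset B N T σ q).filter (fun c => lrC B N T σ q c = p) := by
    ext c
    simp only [Finset.mem_union, Finset.mem_filter]
    constructor
    · rintro ⟨hcE, h1, h2⟩
      by_cases hge : p' ≤ lrC B N T σ q c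
      · exact Or.inl ⟨hcE, h1, hge⟩
      · push_neg at hge
        refine Or.inr ⟨hcE, ?_⟩
        have hlrt : TightB B N q (lrC B N T σ q c) := (lrC_spec hB htr (hHT c hcE)).1
        have hi1 : iIdx B N T q (lrC B N T σ q c) < iIdx B N T q p' := iIdx_lt hB htr hge hp'
        have hi2 : iIdx B N T q p ≤ iIdx B N T q (lrC B N T σ q c) := iIdx_mono h2
        exact iIdx_inj hB htr hlrt hp (by omega)
    · rintro (⟨hcE, h1, h2⟩ | ⟨hcE, heq⟩)
      · exact ⟨hcE, h1, le_trans (le_of_lt hlt) h2⟩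
      · exact ⟨hcE, heq ▸ frC_le_lrC hB htr (hHT c hcE), le_of_eq heq.symm⟩
  have hd1 : Disjoint ((Eset B N T σ q).filter (fun c => frC B N σ q c ≤ p ∧ p' ≤ lrC B N T σ q c))
      ((Eset B N T σ q).filter (fun c => frC B N σ q c = p')) := by
    rw [Finset.disjoint_left]
    intro c hc1 hc2
    rw [Finset.mem_filter] at hc1 hc2
    omega
  have hd2 : Disjoint ((Eset B N T σ q).filter (fun c => frC B N σ q c ≤ p ∧ p' ≤ lrC B N T σ q c))
      ((Eset B N T σ q).filter (fun c => lrC B N T σ q c = p)) := by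
    rw [Finset.disjoint_left]
    intro c hc1 hc2
    rw [Finset.mem_filter] at hc1 hc2
    omega
  rw [m_as_chains hB htr hHT hp', m_as_chains hB htr hHT hp, hA', hA,
    Finset.sum_union hd1, Finset.sum_union hd2]
  ring

lemma uC_lt_vC (hB : 0 < B) (htr : ∀ t j, hor B T ≤ t ∨ N ≤ j → q t j = 0)
    {c : ℕ × ℕ} (hHT : HasTight B N σ q c) :
    uC B N T σ q c < vC B N T σ q c := by
  have h1 : 1 ≤ iIdx B N T q (frC B N σ q c) := iIdx_pos hB htr (frC_spec hHT).1
  have h2 : iIdx B N T q (frC B N σ q c) ≤ iIdx B N T q (lrC B N T σ q c) :=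
    iIdx_mono (frC_le_lrC hB htr hHT)
  unfold uC vC
  omega

lemma degree_ne_one (hB : 0 < B) (htr : ∀ t j, hor B T ≤ t ∨ N ≤ j → q t j = 0)
    (hHT : ∀ c ∈ Eset B N T σ q, HasTight B N σ q c) (n : ℕ) :
    ((Eset B N T σ q).filter
      (fun c => uC B N T σ q c = n ∨ vC B N T σ q c = n)).card ≠ 1 := by
  intro h1
  obtain ⟨c₀, hc₀eq⟩ := Finset.card_eq_one.mp h1
  have hc₀S : c₀ ∈ (Eset B N T σ q).filter
      (fun c => uC B N T σ q c = n ∨ vC B N T σ q c = n) := by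
    rw [hc₀eq]; exact Finset.mem_singleton_self c₀
  have hc₀E : c₀ ∈ Eset B N T σ q := (Finset.mem_filter.mp hc₀S).1
  have hfct := fct_mem hc₀E
  have hnotint : ¬ ∃ z : ℤ, Int.fract (q c₀.1 c₀.2) = (z : ℝ) :=
    not_isIntR_of_Ioo hfct.1 hfct.2
  have hS : (Eset B N T σ q).filter (fun c => uC B N T σ q c = n)
      ∪ (Eset B N T σ q).filter (fun c => vC B N T σ q c = n) = {c₀} := by
    rw [← Finset.filter_or, hc₀eq]
  have hdisj : Disjoint ((Eset B N T σ q).filter (fun c => uC B N T σ q c = n))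
      ((Eset B N T σ q).filter (fun c => vC B N T σ q c = n)) := by
    rw [Finset.disjoint_left]
    intro c hcu hcv
    rw [Finset.mem_filter] at hcu hcv
    have := uC_lt_vC hB htr (hHT c hcu.1)
    omega
  by_cases hSu : (Eset B N T σ q).filter (fun c => uC B N T σ q c = n) = ∅
  · -- no chains starting at node n
    have hSv : (Eset B N T σ q).filter (fun c => vC B N T σ q c = n) = {c₀} := by
      rw [hSu, Finset.empty_union] at hS
      exact hS
    have hc₀v : vC B N T σ q c₀ = n := by
      have : c₀ ∈ (Eset B N T σ q).filter (fun c => vC B N T σ q c = n) := by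
        rw [hSv]; exact Finset.mem_singleton_self c₀
      exact (Finset.mem_filter.mp this).2
    set p := lrC B N T σ q c₀ with hpdef
    have hp : TightB B N q p := (lrC_spec hB htr (hHT c₀ hc₀E)).1
    have hip : iIdx B N T q p = n := hc₀v
    have hlr_eq : (Eset B N T σ q).filter (fun c => lrC B N T σ q c = p)
        = (Eset B N T σ q).filter (fun c => vC B N T σ q c = n) := by
      ext c
      rw [Finset.mem_filter, Finset.mem_filter]
      constructor
      · rintro ⟨hcE, heq⟩
        refine ⟨hcE, ?_⟩
        show iIdx B N T q (lrC B N T σ q c) = n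
        rw [heq, hip]
      · rintro ⟨hcE, heq⟩
        refine ⟨hcE, ?_⟩
        have hlrt : TightB B N q (lrC B N T σ q c) := (lrC_spec hB htr (hHT c hcE)).1
        exact iIdx_inj hB htr hlrt hp (by rw [hip]; exact heq)
    by_cases hex : ∃ r', TightB B N q r' ∧ iIdx B N T q r' = n + 1
    · obtain ⟨r', hr't, hr'i⟩ := hex
      have hpr' : p < r' := by
        by_contra hcon
        push_neg at hcon
        have := iIdx_mono (q := q) (B := B) (N := N) (T := T) hcon
        omega
      have hcons := conservation hB htr hHT hp hr't hpr' (by omega)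
      have hfr_empty : (Eset B N T σ q).filter (fun c => frC B N σ q c = r') = ∅ := by
        rw [Finset.filter_eq_empty_iff]
        intro c hcE heq
        have : c ∈ (Eset B N T σ q).filter (fun c => uC B N T σ q c = n) := by
          rw [Finset.mem_filter]
          refine ⟨hcE, ?_⟩
          show iIdx B N T q (frC B N σ q c) - 1 = n
          rw [heq, hr'i]
          omega
        rw [hSu] at this
        exact absurd this (Finset.notMem_empty c)
      rw [hfr_empty, hlr_eq, hSv, Finset.sum_empty, Finset.sum_singleton] at hcons
      obtain ⟨z1, hz1⟩ := m_int (B := B) hp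
      obtain ⟨z2, hz2⟩ := m_int (B := B) hr't
      exact hnotint ⟨z1 - z2, by push_cast; rw [hz1, hz2] at hcons; linarith⟩
    · push_neg at hex
      have hcross_eq : (Eset B N T σ q).filter
          (fun c => frC B N σ q c ≤ p ∧ p ≤ lrC B N T σ q c)
          = (Eset B N T σ q).filter (fun c => vC B N T σ q c = n) := by
        ext c
        rw [Finset.mem_filter, Finset.mem_filter]
        constructor
        · rintro ⟨hcE, hf1, hf2⟩
          refine ⟨hcE, ?_⟩
          have hlrt : TightB B N q (lrC B N T σ q c) := (lrC_spec hB htr (hHT c hcE)).1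
          have hge : n ≤ iIdx B N T q (lrC B N T σ q c) := by
            rw [← hip]; exact iIdx_mono hf2
          rcases Nat.lt_or_ge n (iIdx B N T q (lrC B N T σ q c)) with hgt | hle
          · exfalso
            obtain ⟨p'', hp''t, hp''i⟩ := tight_exists_iIdx hB htr
              (iIdx B N T q (lrC B N T σ q c) - (n+1)) (lrC B N T σ q c) (n+1)
              hlrt (by omega) (by omega)
            exact hex p'' hp''t hp''i
          · show iIdx B N T q (lrC B N T σ q c) = n
            omega
        · rintro ⟨hcE, heq⟩
          have hlrt : TightB B N q (lrC B N T σ q c) := (lrC_spec hB htr (hHT c hcE)).1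
          have hlreq : lrC B N T σ q c = p :=
            iIdx_inj hB htr hlrt hp (by rw [hip]; exact heq)
          exact ⟨hcE, hlreq ▸ frC_le_lrC hB htr (hHT c hcE), le_of_eq hlreq.symm⟩
      have hm := m_as_chains hB htr hHT hp
      rw [hcross_eq, hSv, Finset.sum_singleton] at hm
      obtain ⟨z1, hz1⟩ := m_int (B := B) hp
      exact hnotint ⟨z1, by rw [← hm, hz1]⟩
  · -- some chain starts at node n
    obtain ⟨c₁, hc₁⟩ := Finset.nonempty_iff_ne_empty.mpr hSu
    rw [Finset.mem_filter] at hc₁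
    obtain ⟨hc₁E, hc₁u⟩ := hc₁
    set p' := frC B N σ q c₁ with hp'def
    have hp' : TightB B N q p' := (frC_spec (hHT c₁ hc₁E)).1
    have hip' : iIdx B N T q p' = n + 1 := by
      have h2 : 1 ≤ iIdx B N T q p' := iIdx_pos hB htr hp'
      have h3 : iIdx B N T q (frC B N σ q c₁) - 1 = n := hc₁u
      rw [← hp'def] at h3
      omega
    have hSu_eq : (Eset B N T σ q).filter (fun c => uC B N T σ q c = n)
        = (Eset B N T σ q).filter (fun c => frC B N σ q c = p') := by
      ext c
      rw [Finset.mem_filter, Finset.mem_filter]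
      constructor
      · rintro ⟨hcE, heq⟩
        refine ⟨hcE, ?_⟩
        have hfrt : TightB B N q (frC B N σ q c) := (frC_spec (hHT c hcE)).1
        have h2 : 1 ≤ iIdx B N T q (frC B N σ q c) := iIdx_pos hB htr hfrt
        have h3 : iIdx B N T q (frC B N σ q c) - 1 = n := heq
        exact iIdx_inj hB htr hfrt hp' (by omega)
      · rintro ⟨hcE, heq⟩
        refine ⟨hcE, ?_⟩
        show iIdx B N T q (frC B N σ q c) - 1 = n
        rw [heq, hip']
        omega
    by_cases hn : n = 0
    · subst hn
      have hSv : (Eset B N T σ q).filter (fun c => vC B N T σ q c = 0) = ∅ := by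
        rw [Finset.filter_eq_empty_iff]
        intro c hcE heq
        have h2 : 1 ≤ iIdx B N T q (lrC B N T σ q c) :=
          iIdx_pos hB htr (lrC_spec hB htr (hHT c hcE)).1
        have h3 : iIdx B N T q (lrC B N T σ q c) = 0 := heq
        omega
      have hSu_sing : (Eset B N T σ q).filter (fun c => uC B N T σ q c = 0) = {c₀} := by
        rw [hSv, Finset.union_empty] at hS
        exact hS
      have hcross_eq : (Eset B N T σ q).filter
          (fun c => frC B N σ q c ≤ p' ∧ p' ≤ lrC B N T σ q c)
          = (Eset B N T σ q).filter (fun c => frC B N σ q c = p') := by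
        ext c
        rw [Finset.mem_filter, Finset.mem_filter]
        constructor
        · rintro ⟨hcE, hf1, hf2⟩
          refine ⟨hcE, ?_⟩
          have hfrt : TightB B N q (frC B N σ q c) := (frC_spec (hHT c hcE)).1
          have h2 : 1 ≤ iIdx B N T q (frC B N σ q c) := iIdx_pos hB htr hfrt
          have h3 : iIdx B N T q (frC B N σ q c) ≤ iIdx B N T q p' := iIdx_mono hf1
          exact iIdx_inj hB htr hfrt hp' (by omega)
        · rintro ⟨hcE, heq⟩
          exact ⟨hcE, le_of_eq heq, heq ▸ frC_le_lrC hB htr (hHT c hcE)⟩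
      have hm := m_as_chains hB htr hHT hp'
      rw [hcross_eq, ← hSu_eq, hSu_sing, Finset.sum_singleton] at hm
      obtain ⟨z1, hz1⟩ := m_int (B := B) hp'
      exact hnotint ⟨z1, by rw [← hm, hz1]⟩
    · obtain ⟨p, hpt, hplt, hpi⟩ := tight_pred hB htr hp' (by omega)
      have hipn : iIdx B N T q p = n := by omega
      have hSv_eq : (Eset B N T σ q).filter (fun c => vC B N T σ q c = n)
          = (Eset B N T σ q).filter (fun c => lrC B N T σ q c = p) := by
        ext c
        rw [Finset.mem_filter, Finset.mem_filter]
        constructor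
        · rintro ⟨hcE, heq⟩
          refine ⟨hcE, ?_⟩
          have hlrt : TightB B N q (lrC B N T σ q c) := (lrC_spec hB htr (hHT c hcE)).1
          exact iIdx_inj hB htr hlrt hpt (by rw [hipn]; exact heq)
        · rintro ⟨hcE, heq⟩
          refine ⟨hcE, ?_⟩
          show iIdx B N T q (lrC B N T σ q c) = n
          rw [heq, hipn]
      have hcons := conservation hB htr hHT hpt hp' hplt (by omega)
      rw [← hSu_eq, ← hSv_eq] at hcons
      obtain ⟨z1, hz1⟩ := m_int (B := B) hpt
      obtain ⟨z2, hz2⟩ := m_int (B := B) hp'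
      rcases Finset.mem_union.mp (by rw [hS]; exact Finset.mem_singleton_self c₀ :
          c₀ ∈ (Eset B N T σ q).filter (fun c => uC B N T σ q c = n)
          ∪ (Eset B N T σ q).filter (fun c => vC B N T σ q c = n)) with hc₀u | hc₀v
      · have hSvempty : (Eset B N T σ q).filter (fun c => vC B N T σ q c = n) = ∅ := by
          rw [Finset.eq_empty_iff_forall_notMem]
          intro c hc
          have hcS : c ∈ ({c₀} : Finset (ℕ × ℕ)) := by
            rw [← hS]; exact Finset.mem_union_right _ hc
          rw [Finset.mem_singleton] at hcS
          subst hcS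
          exact (Finset.disjoint_left.mp hdisj hc₀u) hc
        have hSusing : (Eset B N T σ q).filter (fun c => uC B N T σ q c = n) = {c₀} := by
          rw [hSvempty, Finset.union_empty] at hS
          exact hS
        rw [hSusing, hSvempty, Finset.sum_singleton, Finset.sum_empty] at hcons
        exact hnotint ⟨z2 - z1, by push_cast; rw [hz1, hz2] at hcons; linarith⟩
      · have hSuempty : (Eset B N T σ q).filter (fun c => uC B N T σ q c = n) = ∅ := by
          rw [Finset.eq_empty_iff_forall_notMem]
          intro c hc
          have hcS : c ∈ ({c₀} : Finset (ℕ × ℕ)) := by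
            rw [← hS]; exact Finset.mem_union_left _ hc
          rw [Finset.mem_singleton] at hcS
          subst hcS
          exact (Finset.disjoint_left.mp hdisj hc) hc₀v
        have hSvsing : (Eset B N T σ q).filter (fun c => vC B N T σ q c = n) = {c₀} := by
          rw [hSuempty, Finset.empty_union] at hS
          exact hS
        rw [hSuempty, hSvsing, Finset.sum_singleton, Finset.sum_empty] at hcons
        exact hnotint ⟨z1 - z2, by push_cast; rw [hz1, hz2] at hcons; linarith⟩

lemma exists_direction (hB : 0 < B) (htr : ∀ t j, hor B T ≤ t ∨ N ≤ j → q t j = 0)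
    (hne : (Fset B N T q).Nonempty) :
    ∃ d : ℕ → ℕ → ℝ,
      (∀ t j, (t, j) ∉ Fset B N T q → d t j = 0) ∧
      (∀ t j, d t j = 0 ∨ d t j = 1 ∨ d t j = -1) ∧
      (∀ t j, lk σ q t j → d (t+1) j = d t j) ∧
      (∀ r, TightB B N q r → ∑ j ∈ range N, d r j = 0) ∧
      (∃ p, p ∈ Fset B N T q ∧ d p.1 p.2 ≠ 0) := by
  have hmemF : ∀ t j, (t, j) ∈ Fset B N T q ↔ (t < hor B T ∧ j < N ∧ ¬ IsIntR (q t j)) := by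
    intro t j
    simp only [Fset, Finset.mem_filter, Finset.mem_product, Finset.mem_range]
    tauto
  have hmemF_succ : ∀ t j, lk σ q t j → ((t+1, j) ∈ Fset B N T q ↔ (t, j) ∈ Fset B N T q) := by
    intro t j hlk
    rw [hmemF, hmemF]
    have hint : IsIntR (q (t+1) j) ↔ IsIntR (q t j) :=
      isIntR_iff_of_int_diff _ (lk_diff σ q hlk)
    constructor
    · rintro ⟨h1, h2, h3⟩
      exact ⟨by omega, h2, fun hi => h3 (hint.mpr hi)⟩
    · rintro ⟨h1, h2, h3⟩
      refine ⟨?_, h2, fun hi => h3 (hint.mp hi)⟩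
      by_contra hcon
      push_neg at hcon
      exact (fun hi => h3 (hint.mp hi)) (htr (t+1) j (Or.inl hcon) ▸ isIntR_zero)
    
  by_cases hEasy : ∃ p, p ∈ Fset B N T q ∧
      ∀ s, ¬ (TightB B N q s ∧ rt σ q p.2 s = rt σ q p.2 p.1)
  · obtain ⟨p₀, hp₀F, hp₀⟩ := hEasy
    classical
    refine ⟨fun t j => if ((t, j) ∈ Fset B N T q ∧ j = p₀.2 ∧
        rt σ q p₀.2 t = rt σ q p₀.2 p₀.1) then 1 else 0, ?_, ?_, ?_, ?_, ?_⟩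
    · intro t j h
      dsimp only
      rw [if_neg (fun hc : ((t, j) ∈ Fset B N T q ∧ j = p₀.2 ∧
        rt σ q p₀.2 t = rt σ q p₀.2 p₀.1) => h hc.1)]
    · intro t j
      dsimp only
      by_cases h : ((t, j) ∈ Fset B N T q ∧ j = p₀.2 ∧ rt σ q p₀.2 t = rt σ q p₀.2 p₀.1)
      · rw [if_pos h]; tauto
      · rw [if_neg h]; tauto
    · intro t j hlk
      dsimp only
      by_cases h : ((t, j) ∈ Fset B N T q ∧ j = p₀.2 ∧ rt σ q p₀.2 t = rt σ q p₀.2 p₀.1)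
      · rw [if_pos h, if_pos ?_]
        obtain ⟨h1, h2, h3⟩ := h
        exact ⟨(hmemF_succ t j hlk).mpr h1, h2, by rw [rt_succ_lk σ q (h2 ▸ hlk)]; exact h3⟩
      · rw [if_neg h, if_neg ?_]
        rintro ⟨h1, h2, h3⟩
        exact h ⟨(hmemF_succ t j hlk).mp h1, h2, by rw [← rt_succ_lk σ q (h2 ▸ hlk)]; exact h3⟩
    · intro r hr
      apply Finset.sum_eq_zero
      intro j _
      dsimp only
      rw [if_neg]
      rintro ⟨h1, h2, h3⟩
      exact hp₀ r ⟨hr, h3⟩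
    · refine ⟨p₀, hp₀F, ?_⟩
      dsimp only
      rw [if_pos ⟨hp₀F, rfl, rfl⟩]
      norm_num
  · push_neg at hEasy
    have hHT : ∀ c ∈ Eset B N T σ q, HasTight B N σ q c := by
      intro c hc
      obtain ⟨p, hp, hcrep⟩ := Finset.mem_image.mp hc
      obtain ⟨s, hs⟩ := hEasy p hp
      subst hcrep
      exact ⟨s, hs⟩
    have hEne : (Eset B N T σ q).Nonempty := hne.image _
    obtain ⟨x, hx1, hx2, hx3, hx4⟩ := flow_exists (Eset B N T σ q)
      (uC B N T σ q) (vC B N T σ q)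
      (fun c hc => uC_lt_vC hB htr (hHT c hc))
      (fun n => by
        have := degree_ne_one hB htr hHT n
        convert this using 2)
      hEne
    -- the cut lemma
    have hcut : ∀ k, ∑ c ∈ (Eset B N T σ q).filter
        (fun c => uC B N T σ q c < k ∧ k ≤ vC B N T σ q c), x c = 0 := by
      intro k
      classical
      set MM := (Eset B N T σ q).sup (vC B N T σ q) with hMM
      have hsub : (Eset B N T σ q).filter (fun c => k ≤ uC B N T σ q c)
          ⊆ (Eset B N T σ q).filter (fun c => k ≤ vC B N T σ q c) := by
        intro c hc
        rw [Finset.mem_filter] at hc ⊢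
        exact ⟨hc.1, le_trans hc.2 (le_of_lt (uC_lt_vC hB htr (hHT c hc.1)))⟩
      have hsdiff : (Eset B N T σ q).filter (fun c => k ≤ vC B N T σ q c)
          \ (Eset B N T σ q).filter (fun c => k ≤ uC B N T σ q c)
          = (Eset B N T σ q).filter (fun c => uC B N T σ q c < k ∧ k ≤ vC B N T σ q c) := by
        ext c
        rw [Finset.mem_sdiff, Finset.mem_filter, Finset.mem_filter, Finset.mem_filter]
        constructor
        · rintro ⟨⟨h1, h2⟩, h3⟩
          refine ⟨h1, ?_, h2⟩
          by_contra hcon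
          exact h3 ⟨h1, by omega⟩
        · rintro ⟨h1, h2, h3⟩
          exact ⟨⟨h1, h3⟩, fun hc => by omega⟩
      have hfib : ∀ (f : (ℕ × ℕ) → ℕ), (∀ c ∈ Eset B N T σ q, k ≤ f c → f c ≤ MM) →
          ∑ c ∈ (Eset B N T σ q).filter (fun c => k ≤ f c), x c
          = ∑ n ∈ Finset.Icc k MM, ∑ c ∈ (Eset B N T σ q).filter (fun c => f c = n), x c := by
        intro f hf
        rw [← Finset.sum_fiberwise_of_maps_to (g := f)
          (t := Finset.Icc k MM) (fun c hc => by
            rw [Finset.mem_filter] at hc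
            exact Finset.mem_Icc.mpr ⟨hc.2, hf c hc.1 hc.2⟩)]
        apply Finset.sum_congr rfl
        intro n hn
        rw [Finset.mem_Icc] at hn
        apply Finset.sum_congr
        · ext c
          rw [Finset.mem_filter, Finset.mem_filter, Finset.mem_filter]
          constructor
          · rintro ⟨⟨h1, _⟩, h2⟩
            exact ⟨h1, h2⟩
          · rintro ⟨h1, h2⟩
            exact ⟨⟨h1, by omega⟩, h2⟩
        · intro c _
          rfl
      have hVsum := hfib (vC B N T σ q) (fun c hc _ => Finset.le_sup hc)
      have hUsum := hfib (uC B N T σ q) (fun c hc h =>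
        le_trans (le_of_lt (uC_lt_vC hB htr (hHT c hc))) (Finset.le_sup hc))
      rw [← hsdiff, Finset.sum_sdiff_eq_sub hsub, hVsum, hUsum]
      rw [← Finset.sum_sub_distrib]
      apply Finset.sum_eq_zero
      intro n _
      rw [hx4 n]
      ring
    classical
    refine ⟨fun t j => if (t, j) ∈ Fset B N T q then x (rt σ q j t, j) else 0,
      ?_, ?_, ?_, ?_, ?_⟩
    · intro t j h
      dsimp only
      rw [if_neg h]
    · intro t j
      dsimp only
      by_cases h : (t, j) ∈ Fset B N T q
      · rw [if_pos h]; exact hx3 _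
      · rw [if_neg h]; tauto
    · intro t j hlk
      dsimp only
      by_cases h : (t, j) ∈ Fset B N T q
      · rw [if_pos h, if_pos ((hmemF_succ t j hlk).mpr h), rt_succ_lk σ q hlk]
      · rw [if_neg h, if_neg (fun hc => h ((hmemF_succ t j hlk).mp hc))]
    · intro r hr
      dsimp only
      have step1 : ∑ j ∈ range N, (if (r, j) ∈ Fset B N T q then x (rt σ q j r, j) else 0)
          = ∑ j ∈ (range N).filter (fun j => (r, j) ∈ Fset B N T q), x (rt σ q j r, j) := by
        rw [Finset.sum_filter]
      rw [step1]
      have hmemE : ∀ j, (r, j) ∈ Fset B N T q → (rt σ q j r, j) ∈ Eset B N T σ q := by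
        intro j hj
        exact Finset.mem_image.mpr ⟨(r, j), hj, rfl⟩
      have step2 : ∑ j ∈ (range N).filter (fun j => (r, j) ∈ Fset B N T q), x (rt σ q j r, j)
          = ∑ c ∈ (Eset B N T σ q).filter
            (fun c => frC B N σ q c ≤ r ∧ r ≤ lrC B N T σ q c), x c := by
        have hcross : ∀ c ∈ (Eset B N T σ q).filter
            (fun c => frC B N σ q c ≤ r ∧ r ≤ lrC B N T σ q c), rt σ q c.2 r = c.1 := by
          intro c hcf
          rw [Finset.mem_filter] at hcf
          exact (cross_iff hB htr hcf.1 (hHT c hcf.1) hr).mpr hcf.2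
        refine Finset.sum_nbij' (fun j => (rt σ q j r, j)) (fun c => c.2) ?_ ?_ ?_ ?_ ?_
        · intro j hj
          rw [Finset.mem_filter] at hj
          rw [Finset.mem_filter]
          exact ⟨hmemE j hj.2, frC_min hr rfl, lrC_max hB htr hr rfl⟩
        · intro c hcf
          have h1 := hcross c hcf
          rw [Finset.mem_filter] at hcf
          rw [Finset.mem_filter, Finset.mem_range]
          refine ⟨(E_elim hcf.1).2.2.1, ?_⟩
          rw [hmemF]
          exact ⟨tight_lt_hor hB htr hr, (E_elim hcf.1).2.2.1, (cross_frac hcf.1 h1).1⟩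
        · intro j _
          rfl
        · intro c hcf
          exact Prod.ext (hcross c hcf) rfl
        · intro j _
          rfl
      rw [step2]
      have hfe : (Eset B N T σ q).filter
          (fun c => frC B N σ q c ≤ r ∧ r ≤ lrC B N T σ q c)
          = (Eset B N T σ q).filter
            (fun c => uC B N T σ q c < iIdx B N T q r ∧ iIdx B N T q r ≤ vC B N T σ q c) := by
        ext c
        rw [Finset.mem_filter, Finset.mem_filter]
        constructor
        · rintro ⟨hcE, h1, h2⟩
          have hfrt : TightB B N q (frC B N σ q c) := (frC_spec (hHT c hcE)).1
          have hipos : 1 ≤ iIdx B N T q (frC B N σ q c) := iIdx_pos hB htr hfrt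
          have hm1 : iIdx B N T q (frC B N σ q c) ≤ iIdx B N T q r := iIdx_mono h1
          have hm2 : iIdx B N T q r ≤ iIdx B N T q (lrC B N T σ q c) := iIdx_mono h2
          refine ⟨hcE, ?_, hm2⟩
          show iIdx B N T q (frC B N σ q c) - 1 < iIdx B N T q r
          omega
        · rintro ⟨hcE, h1, h2⟩
          have hfrt : TightB B N q (frC B N σ q c) := (frC_spec (hHT c hcE)).1
          have hlrt : TightB B N q (lrC B N T σ q c) := (lrC_spec hB htr (hHT c hcE)).1
          have hipos : 1 ≤ iIdx B N T q (frC B N σ q c) := iIdx_pos hB htr hfrt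
          refine ⟨hcE, ?_, ?_⟩
          · by_contra hcon
            push_neg at hcon
            have := iIdx_lt hB htr hcon hfrt
            have h1' : iIdx B N T q (frC B N σ q c) - 1 < iIdx B N T q r := h1
            omega
          · by_contra hcon
            push_neg at hcon
            have := iIdx_lt hB htr hcon hr
            have h2' : iIdx B N T q r ≤ iIdx B N T q (lrC B N T σ q c) := h2
            omega
      rw [hfe]
      exact hcut (iIdx B N T q r)
    · obtain ⟨c, hcE, hcx⟩ := hx2
      obtain ⟨p, hpF, hcrep⟩ := Finset.mem_image.mp hcE
      refine ⟨p, hpF, ?_⟩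
      dsimp only
      rw [if_pos hpF]
      have : (rt σ q p.2 p.1, p.2) = c := hcrep
      rw [this]
      exact hcx


lemma mem_Fset {t j : ℕ} : (t, j) ∈ Fset B N T q ↔
    (t < hor B T ∧ j < N ∧ ¬ IsIntR (q t j)) := by
  simp only [Fset, Finset.mem_filter, Finset.mem_product, Finset.mem_range]
  tauto

lemma floor_lt_of_frac {x : ℝ} (h : ¬ IsIntR x) : ((⌊x⌋ : ℤ) : ℝ) < x :=
  lt_of_le_of_ne (Int.floor_le x) (fun he => h ⟨⌊x⌋, he.symm⟩)

lemma lt_ceil_of_frac {x : ℝ} (h : ¬ IsIntR x) : x < ((⌈x⌉ : ℤ) : ℝ) :=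
  lt_of_le_of_ne (Int.le_ceil x) (fun he => h ⟨⌈x⌉, he⟩)

lemma move (hB : 0 < B) (hq : FracSchedule B N σ q)
    (htr : ∀ t j, hor B T ≤ t ∨ N ≤ j → q t j = 0)
    (e : ℕ → ℕ → ℝ)
    (he1 : ∀ t j, (t, j) ∉ Fset B N T q → e t j = 0)
    (he2 : ∀ t j, e t j = 0 ∨ e t j = 1 ∨ e t j = -1)
    (he3 : ∀ t j, lk σ q t j → e (t+1) j = e t j)
    (he4 : ∀ r, TightB B N q r → ∑ j ∈ range N, e r j = 0)
    (he5 : ∃ p, p ∈ Fset B N T q ∧ e p.1 p.2 ≠ 0) :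
    ∃ δ : ℝ, 0 < δ ∧
      FracSchedule B N σ (fun t j => q t j + δ * e t j) ∧
      (∀ t j, hor B T ≤ t ∨ N ≤ j → q t j + δ * e t j = 0) ∧
      (fracValue B N T (fun t j => q t j + δ * e t j)
        = fracValue B N T q
          + δ * ∑ p ∈ (Fset B N T q).filter (fun p => q p.1 p.2 < 1), e p.1 p.2) ∧
      (Fset B N T (fun t j => q t j + δ * e t j) ⊆ Fset B N T q) ∧
      (∀ t, TightB B N q t → TightB B N (fun t j => q t j + δ * e t j) t) ∧
      (∀ t j, TightT σ q t j → TightT σ (fun t j => q t j + δ * e t j) t j) ∧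
      ((∃ p, p ∈ Fset B N T q ∧ p ∉ Fset B N T (fun t j => q t j + δ * e t j))
        ∨ (∃ t, t < hor B T ∧ ¬ TightB B N q t ∧ TightB B N (fun t j => q t j + δ * e t j) t)
        ∨ (∃ t j, t < hor B T ∧ j < N ∧ ¬ TightT σ q t j
            ∧ TightT σ (fun t j => q t j + δ * e t j) t j)) := by
  classical
  obtain ⟨hq1, hq2, hq3, hq4, hq5⟩ := hq
  -- branch slope of the transition right-hand side
  set brs : ℕ → ℕ → ℝ := fun t j => if 1 < q t j then e t j else 0 with hbrs
  set C1 : Finset ℝ := ((Fset B N T q).filter (fun p => e p.1 p.2 ≠ 0)).image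
      (fun p => if 0 < e p.1 p.2 then ((⌈q p.1 p.2⌉ : ℤ) : ℝ) - q p.1 p.2
        else q p.1 p.2 - ((⌊q p.1 p.2⌋ : ℤ) : ℝ)) with hC1
  set C2 : Finset ℝ := ((range (hor B T)).filter
      (fun t => ¬ TightB B N q t ∧ 0 < ∑ j ∈ range N, e t j)).image
      (fun t => ((B : ℝ) - ∑ j ∈ range N, q t j) / (∑ j ∈ range N, e t j)) with hC2
  set C3 : Finset ℝ := (((range (hor B T)) ×ˢ (range N)).filter
      (fun p => ¬ TightT σ q p.1 p.2 ∧ 0 < e (p.1+1) p.2 - brs p.1 p.2)).image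
      (fun p => ((max (q p.1 p.2 - 1) 0 + (σ (p.1+1) p.2 : ℝ)) - q (p.1+1) p.2)
        / (e (p.1+1) p.2 - brs p.1 p.2)) with hC3
  set Cands : Finset ℝ := C1 ∪ C2 ∪ C3 with hCands
  obtain ⟨p₅, hp₅F, hp₅e⟩ := he5
  have hC1ne : C1.Nonempty := ⟨_, Finset.mem_image.mpr
    ⟨p₅, Finset.mem_filter.mpr ⟨hp₅F, hp₅e⟩, rfl⟩⟩
  have hCne : Cands.Nonempty := by
    obtain ⟨y, hy⟩ := hC1ne
    exact ⟨y, Finset.mem_union.mpr (Or.inl (Finset.mem_union.mpr (Or.inl hy)))⟩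
  have hpos : ∀ y ∈ Cands, 0 < y := by
    intro y hy
    rcases Finset.mem_union.mp hy with hy' | hy'
    · rcases Finset.mem_union.mp hy' with hy'' | hy''
      · obtain ⟨p, hp, rfl⟩ := Finset.mem_image.mp hy''
        rw [Finset.mem_filter] at hp
        have hfr := (mem_Fset.mp hp.1).2.2
        by_cases hsgn : 0 < e p.1 p.2
        · rw [if_pos hsgn]
          have := lt_ceil_of_frac hfr
          linarith
        · rw [if_neg hsgn]
          have := floor_lt_of_frac hfr
          linarith
      · obtain ⟨t, ht, rfl⟩ := Finset.mem_image.mp hy''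
        rw [Finset.mem_filter] at ht
        have hle := hq3 t
        have hne : (∑ j ∈ range N, q t j) ≠ (B:ℝ) := ht.2.1
        apply div_pos (by cases lt_or_eq_of_le hle with
          | inl h => linarith
          | inr h => exact absurd h hne) ht.2.2
    · obtain ⟨p, hp, rfl⟩ := Finset.mem_image.mp hy'
      rw [Finset.mem_filter] at hp
      have hle := hq5 p.1 p.2
      have hne : q (p.1+1) p.2 ≠ max (q p.1 p.2 - 1) 0 + (σ (p.1+1) p.2 : ℝ) := hp.2.1
      apply div_pos (by cases lt_or_eq_of_le hle with
        | inl h => linarith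
        | inr h => exact absurd h hne) hp.2.2
  set δ := Cands.min' hCne with hδdef
  have hδmem : δ ∈ Cands := Finset.min'_mem _ _
  have hδpos : 0 < δ := hpos δ hδmem
  have hδle : ∀ y ∈ Cands, δ ≤ y := fun y hy => Finset.min'_le _ y hy
  -- coordinate bounds
  have hbox : ∀ t j, (t, j) ∈ Fset B N T q →
      ((⌊q t j⌋ : ℤ) : ℝ) ≤ q t j + δ * e t j ∧ q t j + δ * e t j ≤ ((⌈q t j⌉ : ℤ) : ℝ) := by
    intro t j hF
    have hfr := (mem_Fset.mp hF).2.2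
    rcases he2 t j with h0 | h1 | hm1
    · rw [h0, mul_zero, add_zero]
      exact ⟨le_of_lt (floor_lt_of_frac hfr), le_of_lt (lt_ceil_of_frac hfr)⟩
    · have hcand : ((⌈q t j⌉ : ℤ) : ℝ) - q t j ∈ Cands := by
        apply Finset.mem_union.mpr
        refine Or.inl (Finset.mem_union.mpr (Or.inl (Finset.mem_image.mpr
          ⟨(t, j), Finset.mem_filter.mpr ⟨hF, by rw [h1]; norm_num⟩, ?_⟩)))
        rw [if_pos (by rw [h1]; norm_num)]
      have := hδle _ hcand
      constructor
      · rw [h1, mul_one]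
        have := floor_lt_of_frac hfr
        linarith
      · rw [h1, mul_one]
        linarith
    · have hcand : q t j - ((⌊q t j⌋ : ℤ) : ℝ) ∈ Cands := by
        apply Finset.mem_union.mpr
        refine Or.inl (Finset.mem_union.mpr (Or.inl (Finset.mem_image.mpr
          ⟨(t, j), Finset.mem_filter.mpr ⟨hF, by rw [hm1]; norm_num⟩, ?_⟩)))
        rw [if_neg (by rw [hm1]; norm_num)]
      have := hδle _ hcand
      constructor
      · rw [hm1]
        linarith
      · rw [hm1]
        have := lt_ceil_of_frac hfr
        linarith
  have hsame : ∀ t j, (t, j) ∉ Fset B N T q → q t j + δ * e t j = q t j := by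
    intro t j h
    rw [he1 t j h, mul_zero, add_zero]
  have hnotF_out : ∀ t j, hor B T ≤ t ∨ N ≤ j → (t, j) ∉ Fset B N T q := by
    intro t j h hF
    rw [mem_Fset] at hF
    omega
  have hint_notF : ∀ t j, IsIntR (q t j) → (t, j) ∉ Fset B N T q := by
    intro t j h hF
    exact (mem_Fset.mp hF).2.2 h
  -- the key transition branch computation
  have hles1 : ∀ t j, q t j ≤ 1 → q t j + δ * e t j ≤ 1 := by
    intro t j hle
    by_cases hF : (t, j) ∈ Fset B N T q
    · have hfr := (mem_Fset.mp hF).2.2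
      have h2 := (hbox t j hF).2
      have hc1 : (⌈q t j⌉ : ℤ) ≤ 1 := Int.ceil_le.mpr (by exact_mod_cast hle)
      have : ((⌈q t j⌉ : ℤ) : ℝ) ≤ 1 := by exact_mod_cast hc1
      linarith
    · rw [hsame t j hF]; exact hle
  have hge1 : ∀ t j, 1 < q t j → 1 ≤ q t j + δ * e t j := by
    intro t j hgt
    by_cases hF : (t, j) ∈ Fset B N T q
    · have h2 := (hbox t j hF).1
      have hc1 : (1:ℤ) ≤ ⌊q t j⌋ := Int.le_floor.mpr (by exact_mod_cast (le_of_lt hgt))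
      have : (1:ℝ) ≤ ((⌊q t j⌋ : ℤ) : ℝ) := by exact_mod_cast hc1
      linarith
    · rw [hsame t j hF]; exact le_of_lt hgt
  have hrhs : ∀ t j, t < hor B T → j < N →
      max (q t j + δ * e t j - 1) 0 = max (q t j - 1) 0 + δ * brs t j := by
    intro t j ht hj
    by_cases hgt : 1 < q t j
    · have h1 : (1:ℝ) ≤ q t j + δ * e t j := hge1 t j hgt
      rw [hbrs]
      simp only [if_pos hgt]
      rw [max_eq_left (by linarith), max_eq_left (by linarith)]
      ring
    · push_neg at hgt
      have h1 : q t j + δ * e t j ≤ 1 := hles1 t j hgt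
      rw [hbrs]
      simp only [if_neg (not_lt.mpr hgt)]
      rw [max_eq_right (by linarith), max_eq_right (by linarith)]
      ring
  -- tight transition preservation
  have htpT : ∀ t j, TightT σ q t j → TightT σ (fun t j => q t j + δ * e t j) t j := by
    intro t j htt
    unfold TightT at htt ⊢
    by_cases hj : j < N
    · by_cases ht : t < hor B T
      · by_cases hgt : 1 < q t j
        · have hlk : lk σ q t j := ⟨htt, hgt⟩
          have hee := he3 t j hlk
          show q (t+1) j + δ * e (t+1) j = max (q t j + δ * e t j - 1) 0 + (σ (t+1) j : ℝ)
          rw [hrhs t j ht hj, hbrs]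
          simp only [if_pos hgt]
          rw [htt, hee]
          ring
        · push_neg at hgt
          have hLHS : q (t+1) j = (σ (t+1) j : ℝ) := by
            rw [htt, max_eq_right (by linarith), zero_add]
          have he0 : e (t+1) j = 0 := he1 _ _ (hint_notF _ _ (hLHS ▸ isIntR_natCast _))
          show q (t+1) j + δ * e (t+1) j = max (q t j + δ * e t j - 1) 0 + (σ (t+1) j : ℝ)
          rw [he0, mul_zero, add_zero, hrhs t j ht hj, hbrs]
          simp only [if_neg (not_lt.mpr hgt)]
          rw [htt]
          ring
      · push_neg at ht
        have h1 : e t j = 0 := he1 _ _ (hnotF_out t j (Or.inl ht))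
        have h2 : e (t+1) j = 0 := he1 _ _ (hnotF_out (t+1) j (Or.inl (by omega)))
        show q (t+1) j + δ * e (t+1) j = max (q t j + δ * e t j - 1) 0 + (σ (t+1) j : ℝ)
        rw [h1, h2, mul_zero, add_zero, add_zero, htt]
    · push_neg at hj
      have h1 : e t j = 0 := he1 _ _ (hnotF_out t j (Or.inr hj))
      have h2 : e (t+1) j = 0 := he1 _ _ (hnotF_out (t+1) j (Or.inr hj))
      show q (t+1) j + δ * e (t+1) j = max (q t j + δ * e t j - 1) 0 + (σ (t+1) j : ℝ)
      rw [h1, h2, mul_zero, add_zero, add_zero, htt]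
  -- tight budget preservation
  have htpB : ∀ t, TightB B N q t → TightB B N (fun t j => q t j + δ * e t j) t := by
    intro t htt
    unfold TightB at htt ⊢
    rw [Finset.sum_add_distrib, ← Finset.mul_sum, he4 t htt, mul_zero, add_zero]
    exact htt
  -- feasibility
  have hfeas : FracSchedule B N σ (fun t j => q t j + δ * e t j) := by
    refine ⟨?_, ?_, ?_, ?_, ?_⟩
    · intro t j
      by_cases hF : (t, j) ∈ Fset B N T q
      · have h1 := (hbox t j hF).1
        have h2 : (0:ℝ) ≤ ((⌊q t j⌋ : ℤ) : ℝ) := by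
          exact_mod_cast Int.floor_nonneg.mpr (hq1 t j)
        dsimp only
        linarith
      · dsimp only
        rw [hsame t j hF]
        exact hq1 t j
    · intro t j hj
      dsimp only
      rw [hsame t j (hnotF_out t j (Or.inr hj)), hq2 t j hj]
    · intro t
      dsimp only
      rw [Finset.sum_add_distrib, ← Finset.mul_sum]
      by_cases htt : TightB B N q t
      · rw [he4 t htt, mul_zero, add_zero]
        exact hq3 t
      · have hlt : (∑ j ∈ range N, q t j) < B := lt_of_le_of_ne (hq3 t) htt
        by_cases hsgn : 0 < ∑ j ∈ range N, e t j
        · by_cases ht : t < hor B T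
          · have hcand : ((B : ℝ) - ∑ j ∈ range N, q t j) / (∑ j ∈ range N, e t j) ∈ Cands := by
              apply Finset.mem_union.mpr
              exact Or.inl (Finset.mem_union.mpr (Or.inr (Finset.mem_image.mpr
                ⟨t, Finset.mem_filter.mpr ⟨Finset.mem_range.mpr ht, htt, hsgn⟩, rfl⟩)))
            have hd := hδle _ hcand
            have h3 : δ * (∑ j ∈ range N, e t j) ≤ (B : ℝ) - ∑ j ∈ range N, q t j :=
              (le_div_iff₀ hsgn).mp hd
            linarith
          · push_neg at ht
            have : ∑ j ∈ range N, e t j = 0 := by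
              apply Finset.sum_eq_zero
              intro j _
              exact he1 t j (hnotF_out t j (Or.inl ht))
            rw [this, mul_zero, add_zero]
            exact hq3 t
        · push_neg at hsgn
          have : δ * ∑ j ∈ range N, e t j ≤ 0 :=
            mul_nonpos_of_nonneg_of_nonpos (le_of_lt hδpos) hsgn
          linarith
    · intro j
      dsimp only
      by_cases hj : j < N
      · rcases he2 0 j with h0 | h1 | hm1
        · rw [h0, mul_zero, add_zero]; exact hq4 j
        · have hF : (0, j) ∈ Fset B N T q := by
            by_contra hc
            rw [he1 0 j hc] at h1
            norm_num at h1
          have hfr := (mem_Fset.mp hF).2.2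
          have h2 := (hbox 0 j hF).2
          have hlt : q 0 j ≤ ((σ 0 j : ℕ) : ℝ) := hq4 j
          have hc1 : (⌈q 0 j⌉ : ℤ) ≤ ((σ 0 j : ℕ) : ℤ) := Int.ceil_le.mpr (by exact_mod_cast hlt)
          have : ((⌈q 0 j⌉ : ℤ) : ℝ) ≤ ((σ 0 j : ℕ) : ℝ) := by exact_mod_cast hc1
          linarith
        · have h2 : δ * e 0 j ≤ 0 := by
            rw [hm1]
            linarith
          have := hq4 j
          linarith
      · push_neg at hj
        rw [hsame 0 j (hnotF_out 0 j (Or.inr hj))]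
        exact hq4 j
    · intro t j
      dsimp only
      by_cases hj : j < N
      · by_cases ht : t < hor B T
        · by_cases htt : TightT σ q t j
          · exact le_of_eq (htpT t j htt)
          · have hlt : q (t+1) j < max (q t j - 1) 0 + (σ (t+1) j : ℝ) :=
              lt_of_le_of_ne (hq5 t j) htt
            rw [hrhs t j ht hj]
            by_cases hsgn : 0 < e (t+1) j - brs t j
            · have hcand : ((max (q t j - 1) 0 + (σ (t+1) j : ℝ)) - q (t+1) j)
                  / (e (t+1) j - brs t j) ∈ Cands := by
                apply Finset.mem_union.mpr
                refine Or.inr (Finset.mem_image.mpr ⟨(t, j), Finset.mem_filter.mpr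
                  ⟨Finset.mem_product.mpr ⟨Finset.mem_range.mpr ht, Finset.mem_range.mpr hj⟩,
                    htt, hsgn⟩, rfl⟩)
              have hd := hδle _ hcand
              have h3 : δ * (e (t+1) j - brs t j)
                  ≤ (max (q t j - 1) 0 + (σ (t+1) j : ℝ)) - q (t+1) j :=
                (le_div_iff₀ hsgn).mp hd
              nlinarith
            · push_neg at hsgn
              have h3 : δ * (e (t+1) j - brs t j) ≤ 0 :=
                mul_nonpos_of_nonneg_of_nonpos (le_of_lt hδpos) hsgn
              nlinarith
        · push_neg at ht
          have h1 : e t j = 0 := he1 _ _ (hnotF_out t j (Or.inl ht))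
          have h2 : e (t+1) j = 0 := he1 _ _ (hnotF_out (t+1) j (Or.inl (by omega)))
          rw [h1, h2, mul_zero, add_zero, add_zero]
          exact hq5 t j
      · push_neg at hj
        have h1 : e t j = 0 := he1 _ _ (hnotF_out t j (Or.inr hj))
        have h2 : e (t+1) j = 0 := he1 _ _ (hnotF_out (t+1) j (Or.inr hj))
        rw [h1, h2, mul_zero, add_zero, add_zero]
        exact hq5 t j
  -- truncation
  have htrunc : ∀ t j, hor B T ≤ t ∨ N ≤ j → q t j + δ * e t j = 0 := by
    intro t j h
    rw [hsame t j (hnotF_out t j h), htr t j h]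
  -- value formula
  have hval : fracValue B N T (fun t j => q t j + δ * e t j)
      = fracValue B N T q
        + δ * ∑ p ∈ (Fset B N T q).filter (fun p => q p.1 p.2 < 1), e p.1 p.2 := by
    have hterm : ∀ t j, t < hor B T → j < N →
        min (q t j + δ * e t j) 1 - min (q t j) 1
        = if (¬ IsIntR (q t j) ∧ q t j < 1) then δ * e t j else 0 := by
      intro t j ht hj
      by_cases hF : (t, j) ∈ Fset B N T q
      · have hfr := (mem_Fset.mp hF).2.2
        by_cases hlt : q t j < 1
        · rw [if_pos ⟨hfr, hlt⟩]
          have h1 : q t j + δ * e t j ≤ 1 := hles1 t j (le_of_lt hlt)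
          rw [min_eq_left h1, min_eq_left (le_of_lt hlt)]
          ring
        · push_neg at hlt
          have hgt : 1 < q t j := lt_of_le_of_ne hlt (fun hc => hfr (hc ▸ ⟨1, by norm_num⟩))
          rw [if_neg (fun hc : (¬ IsIntR (q t j) ∧ q t j < 1) => absurd hc.2 (not_lt.mpr hlt))]
          rw [min_eq_right (hge1 t j hgt), min_eq_right (le_of_lt hgt)]
          ring
      · have hint : IsIntR (q t j) := by
          by_contra hc
          exact hF (mem_Fset.mpr ⟨ht, hj, hc⟩)
        rw [if_neg (fun hc : (¬ IsIntR (q t j) ∧ q t j < 1) => hc.1 hint), hsame t j hF]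
        ring
    have hsetid : ((range (hor B T)) ×ˢ (range N)).filter
        (fun p => ¬ IsIntR (q p.1 p.2) ∧ q p.1 p.2 < 1)
        = (Fset B N T q).filter (fun p => q p.1 p.2 < 1) := by
      ext p
      simp only [Finset.mem_filter, Fset]
      tauto
    have hdiff : (∑ t ∈ range (hor B T), ∑ j ∈ range N, min (q t j + δ * e t j) 1)
        - (∑ t ∈ range (hor B T), ∑ j ∈ range N, min (q t j) 1)
        = δ * ∑ p ∈ (Fset B N T q).filter (fun p => q p.1 p.2 < 1), e p.1 p.2 := by
      rw [← Finset.sum_sub_distrib]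
      have h1 : ∀ t ∈ range (hor B T),
          (∑ j ∈ range N, min (q t j + δ * e t j) 1) - (∑ j ∈ range N, min (q t j) 1)
          = ∑ j ∈ range N, (if (¬ IsIntR (q t j) ∧ q t j < 1) then δ * e t j else 0) := by
        intro t ht
        rw [← Finset.sum_sub_distrib]
        exact Finset.sum_congr rfl (fun j hj =>
          hterm t j (Finset.mem_range.mp ht) (Finset.mem_range.mp hj))
      rw [Finset.sum_congr rfl h1, ← Finset.sum_product', ← Finset.sum_filter, hsetid,
        Finset.mul_sum]
    have hh : fracValue B N T q = ∑ t ∈ range (hor B T), ∑ j ∈ range N, min (q t j) 1 := rfl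
    have hh' : fracValue B N T (fun t j => q t j + δ * e t j)
        = ∑ t ∈ range (hor B T), ∑ j ∈ range N, min (q t j + δ * e t j) 1 := rfl
    rw [hh, hh']
    linarith
  -- Fset shrinks (weakly)
  have hFsub : Fset B N T (fun t j => q t j + δ * e t j) ⊆ Fset B N T q := by
    intro p hp
    have hp' := (mem_Fset (q := fun t j => q t j + δ * e t j)
      (t := p.1) (j := p.2)).mp hp
    by_contra hc
    apply hp'.2.2
    show IsIntR (q p.1 p.2 + δ * e p.1 p.2)
    rw [hsame p.1 p.2 hc]
    by_contra hc2
    exact hc (mem_Fset.mpr ⟨hp'.1, hp'.2.1, hc2⟩)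
  -- progress
  have hprog : (∃ p, p ∈ Fset B N T q ∧ p ∉ Fset B N T (fun t j => q t j + δ * e t j))
      ∨ (∃ t, t < hor B T ∧ ¬ TightB B N q t ∧ TightB B N (fun t j => q t j + δ * e t j) t)
      ∨ (∃ t j, t < hor B T ∧ j < N ∧ ¬ TightT σ q t j
          ∧ TightT σ (fun t j => q t j + δ * e t j) t j) := by
    rcases Finset.mem_union.mp hδmem with h12 | h3
    · rcases Finset.mem_union.mp h12 with h1 | h2
      · obtain ⟨p, hp, hpe⟩ := Finset.mem_image.mp h1
        rw [Finset.mem_filter] at hp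
        left
        refine ⟨p, hp.1, ?_⟩
        intro hcon
        have hmem' := (mem_Fset (q := fun t j => q t j + δ * e t j)
          (t := p.1) (j := p.2)).mp hcon
        apply hmem'.2.2
        show IsIntR (q p.1 p.2 + δ * e p.1 p.2)
        rcases he2 p.1 p.2 with h0 | h1' | hm1
        · exact absurd h0 hp.2
        · rw [if_pos (by rw [h1']; norm_num)] at hpe
          refine ⟨⌈q p.1 p.2⌉, ?_⟩
          rw [← hpe, h1']
          ring
        · rw [if_neg (by rw [hm1]; norm_num)] at hpe
          refine ⟨⌊q p.1 p.2⌋, ?_⟩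
          rw [← hpe, hm1]
          ring
      · obtain ⟨t, ht, hte⟩ := Finset.mem_image.mp h2
        rw [Finset.mem_filter, Finset.mem_range] at ht
        right; left
        refine ⟨t, ht.1, ht.2.1, ?_⟩
        unfold TightB
        dsimp only
        rw [Finset.sum_add_distrib, ← Finset.mul_sum]
        have hs := ht.2.2
        have : δ * (∑ j ∈ range N, e t j) = (B : ℝ) - ∑ j ∈ range N, q t j := by
          rw [← hte, div_mul_cancel₀ _ (ne_of_gt hs)]
        linarith
    · obtain ⟨p, hp, hpe⟩ := Finset.mem_image.mp h3
      rw [Finset.mem_filter, Finset.mem_product, Finset.mem_range, Finset.mem_range] at hp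
      right; right
      refine ⟨p.1, p.2, hp.1.1, hp.1.2, hp.2.1, ?_⟩
      unfold TightT
      show q (p.1+1) p.2 + δ * e (p.1+1) p.2
        = max (q p.1 p.2 + δ * e p.1 p.2 - 1) 0 + (σ (p.1+1) p.2 : ℝ)
      rw [hrhs p.1 p.2 hp.1.1 hp.1.2]
      have hs := hp.2.2
      have : δ * (e (p.1+1) p.2 - brs p.1 p.2)
          = (max (q p.1 p.2 - 1) 0 + (σ (p.1+1) p.2 : ℝ)) - q (p.1+1) p.2 := by
        rw [← hpe, div_mul_cancel₀ _ (ne_of_gt hs)]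
      linarith
  exact ⟨δ, hδpos, hfeas, htrunc, hval, hFsub, htpB, htpT, hprog⟩

end TightLemmas

noncomputable def muv : ℕ :=
  (hor B T * N + hor B T + 1) * (Fset B N T q).card
  + ((range (hor B T)).filter (fun t => ¬ TightB B N q t)).card
  + (((range (hor B T)) ×ˢ (range N)).filter (fun p => ¬ TightT σ q p.1 p.2)).card

section StepLemmas

variable {B N T : ℕ} {σ : ℕ → ℕ → ℕ} {q : ℕ → ℕ → ℝ}

lemma step (hB : 0 < B) (hq : FracSchedule B N σ q)
    (htr : ∀ t j, hor B T ≤ t ∨ N ≤ j → q t j = 0)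
    (hfr : (Fset B N T q).Nonempty)
    (hopt : ∀ q'', FracSchedule B N σ q'' → fracValue B N T q'' ≤ fracValue B N T q) :
    ∃ q' : ℕ → ℕ → ℝ, FracSchedule B N σ q' ∧ (∀ t j, hor B T ≤ t ∨ N ≤ j → q' t j = 0) ∧
      fracValue B N T q' = fracValue B N T q ∧ muv B N T σ q' < muv B N T σ q := by
  classical
  obtain ⟨d, hd1, hd2, hd3, hd4, hd5⟩ := exists_direction hB htr hfr
  obtain ⟨δ₁, hδ₁pos, hfeas₁, htr₁, hval₁, hFsub₁, htpB₁, htpT₁, hprog₁⟩ :=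
    move hB hq htr d hd1 hd2 hd3 hd4 hd5
  obtain ⟨δ₂, hδ₂pos, hfeas₂, htr₂', hval₂, hsub₂', htb₂', htt₂', hpr₂'⟩ :=
    move hB hq htr (fun t j => -(d t j))
      (fun t j h => by show -(d t j) = 0; rw [hd1 t j h]; ring)
      (fun t j => by
        show -(d t j) = 0 ∨ -(d t j) = 1 ∨ -(d t j) = -1
        rcases hd2 t j with h | h | h
        · exact Or.inl (by rw [h]; ring)
        · exact Or.inr (Or.inr (by rw [h]))
        · exact Or.inr (Or.inl (by rw [h]; ring)))
      (fun t j hlk => by show -(d (t+1) j) = -(d t j); rw [hd3 t j hlk])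
      (fun r hr => by
        show ∑ j ∈ range N, -(d r j) = 0
        rw [Finset.sum_neg_distrib, hd4 r hr, neg_zero])
      (by
        obtain ⟨p, hpF, hpe⟩ := hd5
        exact ⟨p, hpF, by simpa using hpe⟩)
  set S := ∑ p ∈ (Fset B N T q).filter (fun p => q p.1 p.2 < 1), d p.1 p.2 with hSdef
  have hS2 : (∑ p ∈ (Fset B N T q).filter (fun p => q p.1 p.2 < 1),
      (fun t j => -(d t j)) p.1 p.2) = -S := by
    rw [hSdef, ← Finset.sum_neg_distrib]
  have h1 := hopt _ hfeas₁
  have h2 := hopt _ hfeas₂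
  rw [hval₁] at h1
  rw [hval₂, hS2] at h2
  have hSz : S = 0 := by nlinarith
  have hvalz : fracValue B N T (fun t j => q t j + δ₁ * d t j) = fracValue B N T q := by
    rw [hval₁, hSz]
    ring
  refine ⟨(fun t j => q t j + δ₁ * d t j), hfeas₁, htr₁, hvalz, ?_⟩
  -- μ decreases
  unfold muv
  set K := hor B T * N + hor B T with hK
  set cF := (Fset B N T q).card
  set cF' := (Fset B N T (fun t j => q t j + δ₁ * d t j)).card
  set sB := ((range (hor B T)).filter (fun t => ¬ TightB B N q t)).card
  set sB' := ((range (hor B T)).filter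
    (fun t => ¬ TightB B N (fun t j => q t j + δ₁ * d t j) t)).card
  set sT := (((range (hor B T)) ×ˢ (range N)).filter
    (fun p => ¬ TightT σ q p.1 p.2)).card
  set sT' := (((range (hor B T)) ×ˢ (range N)).filter
    (fun p => ¬ TightT σ (fun t j => q t j + δ₁ * d t j) p.1 p.2)).card
  have hcF : cF' ≤ cF := Finset.card_le_card hFsub₁
  have hsBsub : ((range (hor B T)).filter
      (fun t => ¬ TightB B N (fun t j => q t j + δ₁ * d t j) t))
      ⊆ ((range (hor B T)).filter (fun t => ¬ TightB B N q t)) := by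
    intro t ht
    rw [Finset.mem_filter] at ht ⊢
    exact ⟨ht.1, fun hc => ht.2 (htpB₁ t hc)⟩
  have hsTsub : (((range (hor B T)) ×ˢ (range N)).filter
      (fun p => ¬ TightT σ (fun t j => q t j + δ₁ * d t j) p.1 p.2))
      ⊆ (((range (hor B T)) ×ˢ (range N)).filter (fun p => ¬ TightT σ q p.1 p.2)) := by
    intro p hp
    rw [Finset.mem_filter] at hp ⊢
    exact ⟨hp.1, fun hc => hp.2 (htpT₁ p.1 p.2 hc)⟩
  have hsB : sB' ≤ sB := Finset.card_le_card hsBsub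
  have hsT : sT' ≤ sT := Finset.card_le_card hsTsub
  have hsBbound : sB ≤ hor B T := le_trans (Finset.card_le_card (Finset.filter_subset _ _))
    (le_of_eq (Finset.card_range _))
  have hsTbound : sT ≤ hor B T * N := by
    refine le_trans (Finset.card_le_card (Finset.filter_subset _ _)) ?_
    rw [Finset.card_product, Finset.card_range, Finset.card_range]
  rcases hprog₁ with ⟨p, hpF, hpF'⟩ | ⟨t, ht1, ht2, ht3⟩ | ⟨t, j, ht1, ht2, ht3, ht4⟩
  · have hcF' : cF' < cF := by
      apply Finset.card_lt_card
      rw [Finset.ssubset_iff_of_subset hFsub₁]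
      exact ⟨p, hpF, hpF'⟩
    have hK' : sB' + sT' ≤ K := by omega
    nlinarith [hcF', hK', hsBbound, hsTbound]
  · have hsB' : sB' < sB := by
      apply Finset.card_lt_card
      rw [Finset.ssubset_iff_of_subset hsBsub]
      refine ⟨t, Finset.mem_filter.mpr ⟨Finset.mem_range.mpr ht1, ht2⟩, ?_⟩
      rw [Finset.mem_filter]
      rintro ⟨_, hc⟩
      exact hc ht3
    have : (K+1) * cF' ≤ (K+1) * cF := Nat.mul_le_mul_left _ hcF
    omega
  · have hsT' : sT' < sT := by
      apply Finset.card_lt_card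
      rw [Finset.ssubset_iff_of_subset hsTsub]
      refine ⟨(t, j), Finset.mem_filter.mpr
        ⟨Finset.mem_product.mpr ⟨Finset.mem_range.mpr ht1, Finset.mem_range.mpr ht2⟩, ht3⟩, ?_⟩
      rw [Finset.mem_filter]
      rintro ⟨_, hc⟩
      exact hc ht4
    have : (K+1) * cF' ≤ (K+1) * cF := Nat.mul_le_mul_left _ hcF
    omega

end StepLemmas

end SMS


theorem stmt_7 (B : ℕ) (hB : 0 < B) (N T : ℕ) (σ : ℕ → ℕ → ℕ)
    (hσT : ∀ t j, T < t → σ t j = 0) (hσN : ∀ t j, N ≤ j → σ t j = 0)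
    (q : ℕ → ℕ → ℝ) (hq : FracSchedule B N σ q)
    (hopt : ∀ q', FracSchedule B N σ q' → fracValue B N T q' ≤ fracValue B N T q) :
    (∃ q', FracSchedule B N σ q' ∧ fracValue B N T q' = fracValue B N T q ∧
      ∀ t, Set.Subsingleton {j | ¬∃ n : ℤ, q' t j = (n : ℝ)}) ∧
    (∃ q', FracSchedule B N σ q' ∧ fracValue B N T q' = fracValue B N T q ∧
      ∀ t j, ∃ n : ℤ, q' t j = (n : ℝ)) := by
  classical
  have hhor : SMS.hor B T = T + B + 1 := rfl
  set qT : ℕ → ℕ → ℝ := fun t j => if t < SMS.hor B T ∧ j < N then q t j else 0 with hqT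
  obtain ⟨hq1, hq2, hq3, hq4, hq5⟩ := hq
  have hqTfeas : FracSchedule B N σ qT := by
    refine ⟨?_, ?_, ?_, ?_, ?_⟩
    · intro t j
      rw [hqT]
      dsimp only
      by_cases h : t < SMS.hor B T ∧ j < N
      · rw [if_pos h]; exact hq1 t j
      · rw [if_neg h]
    · intro t j hj
      rw [hqT]
      dsimp only
      rw [if_neg (fun hc => by omega)]
    · intro t
      rw [hqT]
      dsimp only
      by_cases ht : t < SMS.hor B T
      · have : ∀ j ∈ Finset.range N, (if t < SMS.hor B T ∧ j < N then q t j else 0) = q t j := by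
          intro j hj
          rw [if_pos ⟨ht, Finset.mem_range.mp hj⟩]
        rw [Finset.sum_congr rfl this]
        exact hq3 t
      · have : ∀ j ∈ Finset.range N, (if t < SMS.hor B T ∧ j < N then q t j else 0) = 0 := by
          intro j hj
          rw [if_neg (fun hc => ht hc.1)]
        rw [Finset.sum_congr rfl this, Finset.sum_const, smul_zero]
        positivity
    · intro j
      rw [hqT]
      dsimp only
      by_cases hj : j < N
      · rw [if_pos ⟨by rw [hhor]; omega, hj⟩]
        exact hq4 j
      · rw [if_neg (fun hc => hj hc.2)]
        positivity
    · intro t j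
      rw [hqT]
      dsimp only
      by_cases h1 : t + 1 < SMS.hor B T ∧ j < N
      · rw [if_pos h1, if_pos ⟨by omega, h1.2⟩]
        exact hq5 t j
      · rw [if_neg h1]
        exact add_nonneg (le_max_right _ _) (Nat.cast_nonneg _)
  have hqTtr : ∀ t j, SMS.hor B T ≤ t ∨ N ≤ j → qT t j = 0 := by
    intro t j h
    rw [hqT]
    dsimp only
    rw [if_neg (fun hc => by omega)]
  have hqTval : fracValue B N T qT = fracValue B N T q := by
    unfold fracValue
    apply Finset.sum_congr rfl
    intro t ht
    apply Finset.sum_congr rfl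
    intro j hj
    rw [hqT]
    dsimp only
    rw [if_pos ⟨by rw [hhor]; exact Finset.mem_range.mp ht, Finset.mem_range.mp hj⟩]
  set M : Set ℕ := {k | ∃ g, (FracSchedule B N σ g ∧
      (∀ t j, SMS.hor B T ≤ t ∨ N ≤ j → g t j = 0) ∧
      fracValue B N T g = fracValue B N T q) ∧ SMS.muv B N T σ g = k} with hM
  have hMne : M.Nonempty := ⟨_, qT, ⟨hqTfeas, hqTtr, hqTval⟩, rfl⟩
  obtain ⟨g₀, ⟨hg₀f, hg₀tr, hg₀v⟩, hg₀k⟩ := Nat.sInf_mem hMne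
  by_cases hfr : (SMS.Fset B N T g₀).Nonempty
  · exfalso
    have hg₀opt : ∀ q'', FracSchedule B N σ q'' →
        fracValue B N T q'' ≤ fracValue B N T g₀ := by
      intro q'' h''
      rw [hg₀v]
      exact hopt q'' h''
    obtain ⟨g₁, hg₁f, hg₁tr, hg₁v, hg₁μ⟩ := SMS.step hB hg₀f hg₀tr hfr hg₀opt
    have hmem : SMS.muv B N T σ g₁ ∈ M := ⟨g₁, ⟨hg₁f, hg₁tr, by rw [hg₁v, hg₀v]⟩, rfl⟩
    have := Nat.sInf_le hmem
    omega
  · have hint : ∀ t j, ∃ n : ℤ, g₀ t j = (n : ℝ) := by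
      intro t j
      by_cases hgrid : t < SMS.hor B T ∧ j < N
      · have hnm : (t, j) ∉ SMS.Fset B N T g₀ := by
          rw [Finset.not_nonempty_iff_eq_empty] at hfr
          rw [hfr]
          exact Finset.notMem_empty _
        rw [SMS.mem_Fset] at hnm
        push_neg at hnm
        exact hnm hgrid.1 hgrid.2
      · have : g₀ t j = 0 := by
          apply hg₀tr
          omega
        exact ⟨0, by rw [this]; norm_num⟩
    constructor
    · exact ⟨g₀, hg₀f, hg₀v, fun t x hx y hy => absurd (hint t x) hx⟩
    · exact ⟨g₀, hg₀f, hg₀v, hint⟩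
end

section
/- For any buffer management algorithm ALG for the shared memory switch, there exists a regular algorithm ALG′ (work-conserving, and discarding packets only upon buffer overflow) that transmits at least as many packets as ALG on every input sequence. -/
/-- A run of a buffer-management algorithm on a shared memory switch with
buffer size `B`, queues `0, …, N-1` and arrivals `σ`. `q t j` is the content of
queue `j` after the admission phase of slot `t` (arbitrary accept/push-out
decisions subject to total occupancy `≤ B`); `x t j ∈ {0,1}` records whether
queue `j` transmits a packet on slot `t` (only possible if nonempty). -/
def IsRun (B N : ℕ) (σ : ℕ → ℕ → ℕ) (q x : ℕ → ℕ → ℕ) : Prop :=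
  (∀ t j, N ≤ j → q t j = 0) ∧
  (∀ t, ∑ j ∈ Finset.range N, q t j ≤ B) ∧
  (∀ j, q 0 j ≤ σ 0 j) ∧
  (∀ t j, x t j ≤ min (q t j) 1) ∧
  (∀ t j, q (t + 1) j ≤ q t j - x t j + σ (t + 1) j)

/-- A run is regular if it is work-conserving (every nonempty queue transmits
on every slot) and it drops packets only when accepting everything would
overflow the buffer. -/
def RegularRun (B N : ℕ) (σ : ℕ → ℕ → ℕ) (q x : ℕ → ℕ → ℕ) : Prop :=
  (∀ t j, x t j = min (q t j) 1) ∧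
  ((∃ j < N, q 0 j < σ 0 j) → B < ∑ j ∈ Finset.range N, σ 0 j) ∧
  (∀ t, (∃ j < N, q (t + 1) j < q t j - x t j + σ (t + 1) j) →
    B < ∑ j ∈ Finset.range N, (q t j - x t j + σ (t + 1) j))

namespace Stmt8Aux

/-- Deficit between the original run `q` and its work-conserving version `q1`:
`q1 t j = q t j - d t j`, where `d` grows whenever `q1` transmits but `q` idles. -/
def d (q x : ℕ → ℕ → ℕ) : ℕ → ℕ → ℕ
  | 0, _ => 0
  | t+1, j => min (q (t+1) j) (d q x t j + min (q t j - d q x t j) 1 - x t j)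

def q1 (q x : ℕ → ℕ → ℕ) (t j : ℕ) : ℕ := q t j - d q x t j
def x1 (q x : ℕ → ℕ → ℕ) (t j : ℕ) : ℕ := min (q1 q x t j) 1

lemma d_le (q x : ℕ → ℕ → ℕ) (t j : ℕ) : d q x t j ≤ q t j := by
  cases t with
  | zero => simp [d]
  | succ t => simp [d]

lemma q1_le (q x : ℕ → ℕ → ℕ) (t j : ℕ) : q1 q x t j ≤ q t j := Nat.sub_le _ _

lemma q1_evol (q x σ : ℕ → ℕ → ℕ)
    (hx : ∀ t j, x t j ≤ min (q t j) 1)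
    (hq : ∀ t j, q (t + 1) j ≤ q t j - x t j + σ (t + 1) j) (t j : ℕ) :
    q1 q x (t+1) j ≤ q1 q x t j - x1 q x t j + σ (t+1) j := by
  have h1 := d_le q x t j
  have h2 := hx t j
  have h3 := hq t j
  simp only [q1, x1, d]
  omega

/-- Cumulatively, the work-conserving run transmits at least as much from each queue. -/
lemma cum (q x : ℕ → ℕ → ℕ)
    (hx : ∀ t j, x t j ≤ min (q t j) 1) (τ j : ℕ) :
    (∑ t ∈ Finset.range τ, x t j) + d q x τ j ≤ ∑ t ∈ Finset.range τ, x1 q x t j := by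
  induction τ with
  | zero => simp [d]
  | succ τ ih =>
    have h2 := hx τ j
    have h1 := d_le q x τ j
    rw [Finset.sum_range_succ, Finset.sum_range_succ]
    simp only [x1, q1, d] at *
    omega

/-- The regular greedy run dominating the work-conserving run `q1`. -/
def q2 (B N : ℕ) (σ q x : ℕ → ℕ → ℕ) : ℕ → ℕ → ℕ
  | 0, j =>
      if ∑ i ∈ Finset.range N, σ 0 i ≤ B then (if j < N then σ 0 j else 0)
      else q1 q x 0 j
  | t+1, j =>
      if ∑ i ∈ Finset.range N,
          (q2 B N σ q x t i - min (q2 B N σ q x t i) 1 + σ (t+1) i) ≤ B then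
        (if j < N then q2 B N σ q x t j - min (q2 B N σ q x t j) 1 + σ (t+1) j else 0)
      else q1 q x (t+1) j

def x2 (B N : ℕ) (σ q x : ℕ → ℕ → ℕ) (t j : ℕ) : ℕ := min (q2 B N σ q x t j) 1

lemma mono_step (a b s : ℕ) (hab : a ≤ b) : a - min a 1 + s ≤ b - min b 1 + s := by omega

section Main
variable (B N : ℕ) (σ q x : ℕ → ℕ → ℕ)

lemma q1_zero (h1 : ∀ t j, N ≤ j → q t j = 0) (t j : ℕ) (hj : N ≤ j) :
    q1 q x t j = 0 := by
  have := q1_le q x t j; have := h1 t j hj; omega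

lemma q1_le_q2 (h : IsRun B N σ q x) (t j : ℕ) :
    q1 q x t j ≤ q2 B N σ q x t j := by
  obtain ⟨h1, h2, h3, h4, h5⟩ := h
  induction t with
  | zero =>
    simp only [q2]
    split
    · split
      · exact le_trans (q1_le q x 0 j) (h3 j)
      · rw [q1_zero N q x h1 0 j (by omega)]
    · exact le_rfl
  | succ t ih =>
    simp only [q2]
    split
    · split
      · calc q1 q x (t+1) j ≤ q1 q x t j - x1 q x t j + σ (t+1) j :=
              q1_evol q x σ h4 h5 t j
          _ ≤ _ := mono_step _ _ _ ih
      · rw [q1_zero N q x h1 (t+1) j (by omega)]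
    · exact le_rfl

lemma q2_isrun (h : IsRun B N σ q x) : IsRun B N σ (q2 B N σ q x) (x2 B N σ q x) := by
  obtain ⟨h1, h2, h3, h4, h5⟩ := h
  have hq1z := q1_zero N q x h1
  have hq1le : ∀ t, ∑ i ∈ Finset.range N, q1 q x t i ≤ B := fun t =>
    le_trans (Finset.sum_le_sum fun i _ => q1_le q x t i) (h2 t)
  refine ⟨?_, ?_, ?_, ?_, ?_⟩
  · intro t j hj
    cases t with
    | zero =>
      simp only [q2]; split
      · simp [Nat.not_lt.mpr hj]
      · exact hq1z 0 j hj
    | succ t =>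
      simp only [q2]; split
      · simp [Nat.not_lt.mpr hj]
      · exact hq1z (t+1) j hj
  · intro t
    cases t with
    | zero =>
      simp only [q2]; split
      · rename_i hs
        calc ∑ j ∈ Finset.range N, (if j < N then σ 0 j else 0)
            = ∑ j ∈ Finset.range N, σ 0 j := by
              apply Finset.sum_congr rfl; intro j hj
              simp [Finset.mem_range.mp hj]
          _ ≤ B := hs
      · exact hq1le 0
    | succ t =>
      simp only [q2]; split
      · rename_i hs
        calc ∑ j ∈ Finset.range N,
              (if j < N then q2 B N σ q x t j - min (q2 B N σ q x t j) 1 + σ (t+1) j else 0)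
            = ∑ j ∈ Finset.range N,
              (q2 B N σ q x t j - min (q2 B N σ q x t j) 1 + σ (t+1) j) := by
              apply Finset.sum_congr rfl; intro j hj
              simp [Finset.mem_range.mp hj]
          _ ≤ B := hs
      · exact hq1le (t+1)
  · intro j
    simp only [q2]; split
    · split
      · exact le_rfl
      · exact Nat.zero_le _
    · exact le_trans (q1_le q x 0 j) (h3 j)
  · intro t j; exact le_rfl
  · intro t j
    conv_lhs => simp only [q2]
    split
    · split
      · exact le_rfl
      · exact Nat.zero_le _
    · calc q1 q x (t+1) j ≤ q1 q x t j - x1 q x t j + σ (t+1) j :=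
            q1_evol q x σ h4 h5 t j
        _ ≤ _ := mono_step _ _ _ (q1_le_q2 B N σ q x ⟨h1, h2, h3, h4, h5⟩ t j)

lemma q2_regular :
    RegularRun B N σ (q2 B N σ q x) (x2 B N σ q x) := by
  refine ⟨fun t j => rfl, ?_, ?_⟩
  · rintro ⟨j, hj, hlt⟩
    by_contra hc
    push_neg at hc
    simp only [q2, if_pos hc, if_pos hj] at hlt
    omega
  · intro t
    rintro ⟨j, hj, hlt⟩
    by_contra hc
    push_neg at hc
    simp only [x2] at hc hlt
    conv_lhs at hlt => simp only [q2]
    rw [if_pos hc, if_pos hj] at hlt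
    omega

end Main

end Stmt8Aux

theorem stmt_8 (B N T : ℕ) (hB : 0 < B) (σ : ℕ → ℕ → ℕ)
    (hσT : ∀ t j, T < t → σ t j = 0)
    (q x : ℕ → ℕ → ℕ) (h : IsRun B N σ q x) :
    ∃ q' x', IsRun B N σ q' x' ∧ RegularRun B N σ q' x' ∧
      ∑ t ∈ Finset.range (T + B + 1), ∑ j ∈ Finset.range N, x t j ≤
        ∑ t ∈ Finset.range (T + B + 1), ∑ j ∈ Finset.range N, x' t j := by
  open Stmt8Aux in
  refine ⟨q2 B N σ q x, x2 B N σ q x, q2_isrun B N σ q x h, q2_regular B N σ q x, ?_⟩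
  rw [Finset.sum_comm, Finset.sum_comm (s := Finset.range (T + B + 1))]
  apply Finset.sum_le_sum
  intro j _
  calc ∑ t ∈ Finset.range (T + B + 1), x t j
      ≤ ∑ t ∈ Finset.range (T + B + 1), x1 q x t j := by
        have := cum q x h.2.2.2.1 (T + B + 1) j
        omega
    _ ≤ ∑ t ∈ Finset.range (T + B + 1), x2 B N σ q x t j := by
        apply Finset.sum_le_sum
        intro t _
        have := q1_le_q2 B N σ q x h t j
        simp only [x1, x2]
        omega
end
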